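/- arXiv:0804.4083 — 7 statements merged into one kernel-verified Lean document; each statement's English description precedes it below -/
import Mathlib

section
/- Assume the quasi-Kähler (class W₃) condition. Let T(x,y,z) = (1/2)(F(x,Jy,z) - F(y,Jx,z)) (the (0,3)-torsion tensor of the B-connection). Then the cyclic sum vanishes: T(x,y,Jz) + T(y,z,Jx) + T(z,x,Jy) = 0 for all x, y, z in V. -/
/-- On a quasi-Kähler (class W₃) manifold with Norden metric, the cyclic sum
of the (0,3)-torsion tensor of the B-connection vanishes:
`𝔖_{x,y,z} T(x,y,Jz) = 0`. -/
theorem cyclic_sum_torsion_B_connection_W3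
    {V : Type*} [AddCommGroup V] [Module ℝ V]
    (g : V →ₗ[ℝ] V →ₗ[ℝ] ℝ) (hg_symm : ∀ x y, g x y = g y x)
    (J : V →ₗ[ℝ] V) (hJ : ∀ x, J (J x) = -x)
    (hgJ : ∀ x y, g (J x) (J y) = -(g x y))
    (N : V →ₗ[ℝ] V →ₗ[ℝ] V)
    (hN1 : ∀ x y z, g (N x y) z = g (N x z) y)
    (hN2 : ∀ x y, N x (J y) = -(J (N x y)))
    (F : V → V → V → ℝ) (hF : ∀ x y z, F x y z = g (N x y) z)
    (hW3 : ∀ x y z, F x y z + F y z x + F z x y = 0)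
    (T : V → V → V → ℝ)
    (hT : ∀ x y z, T x y z = (1/2) * (F x (J y) z - F y (J x) z)) :
    ∀ x y z, T x y (J z) + T y z (J x) + T z x (J y) = 0 := by
  have key : ∀ a b c, F a (J b) (J c) = F a b c := by
    intro a b c
    rw [hF, hF, hN2]
    simp only [map_neg, LinearMap.neg_apply, hgJ, neg_neg]
  intro x y z
  rw [hT, hT, hT, key, key, key, key, key, key]
  have h1 := hW3 x y z
  have h2 := hW3 y x z
  linarith
end

section
/- Let Q(x,y) = (1/2) N(x, J y) (so that D_x y = ∇_x y + Q(x,y) is the B-connection). Then for all x, y, z in V: (i) N(x,y) + Q(x, Jy) - J(Q(x,y)) = 0 (expressing DJ = 0), and (ii) g(Q(x,y), z) + g(y, Q(x,z)) = 0 (expressing Dg = 0); in particular the (0,3)-tensor Q(x,y,z) = g(Q(x,y), z) = (1/2) F(x, Jy, z) is skew-symmetric in its last two arguments. -/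
/-- The B-connection `D_x y = ∇_x y + Q(x,y)` with `Q(x,y) = (1/2) N(x,Jy)`
is a natural connection: `DJ = 0` and `Dg = 0`; in particular the (0,3)-tensor
`Q(x,y,z) = g(Q(x,y),z) = (1/2) F(x,Jy,z)` is skew-symmetric in `y, z`. -/
theorem B_connection_natural
    {V : Type*} [AddCommGroup V] [Module ℝ V]
    (g : V →ₗ[ℝ] V →ₗ[ℝ] ℝ) (hg_symm : ∀ x y, g x y = g y x)
    (J : V →ₗ[ℝ] V) (hJ : ∀ x, J (J x) = -x)
    (hgJ : ∀ x y, g (J x) (J y) = -(g x y))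
    (N : V →ₗ[ℝ] V →ₗ[ℝ] V)
    (hN1 : ∀ x y z, g (N x y) z = g (N x z) y)
    (hN2 : ∀ x y, N x (J y) = -(J (N x y)))
    (F : V → V → V → ℝ) (hF : ∀ x y z, F x y z = g (N x y) z)
    (Q : V → V → V) (hQ : ∀ x y, Q x y = (1/2 : ℝ) • N x (J y)) :
    (∀ x y, N x y + Q x (J y) - J (Q x y) = 0) ∧
    (∀ x y z, g (Q x y) z + g y (Q x z) = 0) ∧
    (∀ x y z, g (Q x y) z = (1/2) * F x (J y) z) ∧
    (∀ x y z, g (Q x y) z = -(g (Q x z) y)) := by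
  have key : ∀ x y z, g (Q x y) z + g y (Q x z) = 0 := by
    intro x y z
    have h1 : g (N x (J y)) z = g (J (N x z)) y := by
      rw [hN1 x (J y) z]
      have := hgJ (N x z) (J y)
      rw [hJ y] at this
      have h2 : g (N x z) (J y) = g (J (N x z)) y := by
        have h3 : g (J (N x z)) (-y) = -(g (N x z) (J y)) := this
        simpa using h3.symm
      exact h2
    have h4 : g y (Q x z) = (1/2 : ℝ) * g (N x (J z)) y := by
      rw [hQ, hg_symm, map_smul]; simp
    have h5 : g (Q x y) z = (1/2 : ℝ) * g (N x (J y)) z := by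
      rw [hQ]; simp
    rw [h4, h5, h1, hN2 x z]
    simp
  refine ⟨?_, key, ?_, ?_⟩
  · intro x y
    rw [hQ, hQ, hJ, hN2]
    simp only [map_neg, map_smul, smul_neg, hJ]
    abel_nf
    rw [show (-2:ℤ) • ((1/2:ℝ) • N x y) = -(N x y) by
      rw [Int.cast_smul_eq_zsmul ℝ (-2) ((1/2:ℝ) • N x y) |>.symm, smul_smul]; norm_num]
    abel
  · intro x y z
    rw [hQ, hF]; simp
  · intro x y z
    have := key x y z
    rw [hg_symm y (Q x z)] at this
    linarith
end

section
/- (Corollary 2.5) Let R be a curvature-like quadrilinear form on V satisfying the class-𝓛₂ condition 𝔖_{x,y,z} R(x,y,Jz,Jw) = 0, and suppose K is a Kähler tensor. Then the quadrilinear form H(x,y,z,w) = R(x,y,z,w) - R(x,y,Jz,Jw) is a Kähler tensor. -/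
/-- A quadrilinear form `L` is curvature-like if it has the curvature
skew-symmetries and satisfies the first Bianchi identity. -/
def IsCurvatureLike {V : Type*} [AddCommGroup V] [Module ℝ V]
    (L : V → V → V → V → ℝ) : Prop :=
  (∀ x y z w, L x y z w = -(L y x z w)) ∧
  (∀ x y z w, L x y z w = -(L x y w z)) ∧
  (∀ x y z w, L x y z w + L y z x w + L z x y w = 0)

/-- A curvature-like tensor `L` is a Kähler tensor if moreover
`L(x,y,Jz,Jw) = -L(x,y,z,w)`. -/
def IsKaehlerTensor {V : Type*} [AddCommGroup V] [Module ℝ V]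
    (J : V →ₗ[ℝ] V) (L : V → V → V → V → ℝ) : Prop :=
  IsCurvatureLike L ∧ (∀ x y z w, L x y (J z) (J w) = -(L x y z w))

/-- (Corollary 2.5) If the curvature tensor `K` of the B-connection is
Kählerian on a manifold of the class `W₃ ∩ 𝓛₂`, then the tensor
`H(x,y,z,w) = R(x,y,z,w) - R(x,y,Jz,Jw)` is a Kähler tensor. -/
theorem H_is_Kaehler_tensor
    {V : Type*} [AddCommGroup V] [Module ℝ V]
    (g : V →ₗ[ℝ] V →ₗ[ℝ] ℝ) (hg_symm : ∀ x y, g x y = g y x)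
    (J : V →ₗ[ℝ] V) (hJ : ∀ x, J (J x) = -x)
    (hgJ : ∀ x y, g (J x) (J y) = -(g x y))
    (N : V →ₗ[ℝ] V →ₗ[ℝ] V)
    (hN1 : ∀ x y z, g (N x y) z = g (N x z) y)
    (hN2 : ∀ x y, N x (J y) = -(J (N x y)))
    (P : V → V → V → V → ℝ)
    (hP : ∀ x y z w, P x y z w = g (N x z) (N y w) - g (N y z) (N x w))
    (R : V → V → V → V → ℝ)
    (hR : IsCurvatureLike R)
    (hL2 : ∀ x y z w,
      R x y (J z) (J w) + R y z (J x) (J w) + R z x (J y) (J w) = 0)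
    (K : V → V → V → V → ℝ)
    (hK : ∀ x y z w, K x y z w
      = (1/4) * (2 * R x y z w - 2 * R x y (J z) (J w) + P x y z w))
    (hKKaehler : IsKaehlerTensor J K)
    (H : V → V → V → V → ℝ)
    (hH : ∀ x y z w, H x y z w = R x y z w - R x y (J z) (J w)) :
    IsKaehlerTensor J H := by
  obtain ⟨hKcl, hK2⟩ := hKKaehler
  have hRneg : ∀ x y z w, R x y (-z) (-w) = R x y z w := by
    intro x y z w
    have h := hK2 x y z w
    rw [hK x y (J z) (J w), hK x y z w, hP, hP, hN2, hN2, hN2, hN2] at h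
    simp only [hJ, hgJ, map_neg, LinearMap.neg_apply, neg_neg] at h
    linarith
  obtain ⟨hRa, hRb, hRc⟩ := hR
  refine ⟨⟨?_, ?_, ?_⟩, ?_⟩
  · intro x y z w; rw [hH, hH, hRa x y z w, hRa x y (J z) (J w)]; ring
  · intro x y z w; rw [hH, hH, hRb x y z w, hRb x y (J z) (J w)]; ring
  · intro x y z w
    rw [hH, hH, hH]
    have h1 := hRc x y z w
    have h2 := hL2 x y z w
    linarith
  · intro x y z w
    rw [hH, hH, hJ, hJ, hRneg]
    ring
end

section
/- (Equation 3.2) For every quadrilinear form R on V: τ(R) - τ** = 2τ(K) - (1/2)τ(P), where τ** = Σ_{i,j,k,s} g^{ij} g^{ks} R(e_i, e_k, J e_s, J e_j) and K(x,y,z,w) = (1/4)(2R(x,y,z,w) - 2R(x,y,Jz,Jw) + P(x,y,z,w)). -/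
/-- The Ricci tensor of a quadrilinear form `L`: `ρ(L)(y,z) = g^{ij} L(e_i,y,z,e_j)`. -/
noncomputable def ricci {V ι : Type*} [Fintype ι]
    (ginv : ι → ι → ℝ) (e : ι → V) (L : V → V → V → V → ℝ) (y z : V) : ℝ :=
  ∑ i, ∑ j, ginv i j * L (e i) y z (e j)

/-- The scalar curvature of a quadrilinear form `L`: `τ(L) = g^{ks} ρ(L)(e_k,e_s)`. -/
noncomputable def scalarCurv {V ι : Type*} [Fintype ι]
    (ginv : ι → ι → ℝ) (e : ι → V) (L : V → V → V → V → ℝ) : ℝ :=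
  ∑ k, ∑ s, ginv k s * ricci ginv e L (e k) (e s)

/-- (Equation 3.2) `τ - τ** = 2τ(K) - (1/2)τ(P)`, where
`τ** = g^{ij} g^{ks} R(e_i,e_k,Je_s,Je_j)`. -/
theorem scalar_curvature_relation
    {V : Type*} [AddCommGroup V] [Module ℝ V]
    (g : V →ₗ[ℝ] V →ₗ[ℝ] ℝ) (hg_symm : ∀ x y, g x y = g y x)
    (J : V →ₗ[ℝ] V) (hJ : ∀ x, J (J x) = -x)
    (hgJ : ∀ x y, g (J x) (J y) = -(g x y))
    (N : V →ₗ[ℝ] V →ₗ[ℝ] V)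
    (hN1 : ∀ x y z, g (N x y) z = g (N x z) y)
    (hN2 : ∀ x y, N x (J y) = -(J (N x y)))
    (P : V → V → V → V → ℝ)
    (hP : ∀ x y z w, P x y z w = g (N x z) (N y w) - g (N y z) (N x w))
    {ι : Type*} [Fintype ι] [DecidableEq ι]
    (e : Module.Basis ι ℝ V) (ginv : ι → ι → ℝ)
    (hginv : ∀ i j, ∑ k, ginv i k * g (e k) (e j) = if i = j then 1 else 0)
    (R : V → V → V → V → ℝ)
    (K : V → V → V → V → ℝ)
    (hK : ∀ x y z w, K x y z w
      = (1/4) * (2 * R x y z w - 2 * R x y (J z) (J w) + P x y z w))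
    (tauStarStar : ℝ)
    (hTauStarStar : tauStarStar
      = ∑ i, ∑ j, ∑ k, ∑ s,
          ginv i j * ginv k s * R (e i) (e k) (J (e s)) (J (e j))) :
    scalarCurv ginv (⇑e) R - tauStarStar
      = 2 * scalarCurv ginv (⇑e) K - (1/2) * scalarCurv ginv (⇑e) P := by
  have key : ∀ f : ι → ι → ι → ι → ℝ,
      (∑ i, ∑ j, ∑ k, ∑ s, f i j k s) = ∑ k, ∑ s, ∑ i, ∑ j, f i j k s := by
    intro f
    trans (∑ i, ∑ k, ∑ s, ∑ j, f i j k s)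
    · exact Finset.sum_congr rfl fun i _ =>
        Finset.sum_comm.trans (Finset.sum_congr rfl fun k _ => Finset.sum_comm)
    · exact Finset.sum_comm.trans (Finset.sum_congr rfl fun k _ => Finset.sum_comm)
  rw [hTauStarStar, key]
  simp only [scalarCurv, ricci, hK, Finset.mul_sum, ← Finset.sum_sub_distrib]
  refine Finset.sum_congr rfl fun k _ => Finset.sum_congr rfl fun s _ =>
    Finset.sum_congr rfl fun i _ => Finset.sum_congr rfl fun j _ => by ring
end

section
/- (Equation 3.4) Assume the quasi-Kähler (class W₃) condition. Then τ(P) = -(1/2)‖∇J‖², where ‖∇J‖² = Σ_{i,j,k,s} g^{ij} g^{ks} g(N(e_i,e_k), N(e_j,e_s)) is the square norm of ∇J. -/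
open Finset

private lemma flat6 {ι : Type*} [Fintype ι] (f : ι → ι → ι → ι → ι → ι → ℝ) :
    (∑ x : ι × ι × ι × ι × ι × ι,
        f x.1 x.2.1 x.2.2.1 x.2.2.2.1 x.2.2.2.2.1 x.2.2.2.2.2)
      = ∑ i, ∑ j, ∑ k, ∑ s, ∑ a, ∑ b, f i j k s a b := by
  simp [Fintype.sum_prod_type]

private lemma sum6_swap {ι : Type*} [Fintype ι] (f : ι → ι → ι → ι → ι → ι → ℝ) :
    (∑ i, ∑ j, ∑ k, ∑ s, ∑ a, ∑ b, f i j k s a b)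
      = ∑ i, ∑ j, ∑ k, ∑ s, ∑ a, ∑ b, f k s i j a b := by
  rw [← flat6 f, ← flat6 (fun i j k s a b => f k s i j a b)]
  exact Fintype.sum_bijective
    (fun x : ι × ι × ι × ι × ι × ι => (x.2.2.1, x.2.2.2.1, x.1, x.2.1, x.2.2.2.2.1, x.2.2.2.2.2))
    (Function.Involutive.bijective (fun x => rfl)) _ _ (fun x => rfl)

private lemma sum6_cycle {ι : Type*} [Fintype ι] (f : ι → ι → ι → ι → ι → ι → ℝ) :
    (∑ i, ∑ j, ∑ k, ∑ s, ∑ a, ∑ b, f i j k s a b)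
      = ∑ i, ∑ j, ∑ k, ∑ s, ∑ a, ∑ b, f k s a b i j := by
  rw [← flat6 f, ← flat6 (fun i j k s a b => f k s a b i j)]
  exact Fintype.sum_equiv
    ⟨fun x : ι × ι × ι × ι × ι × ι => (x.2.2.2.2.1, x.2.2.2.2.2, x.1, x.2.1, x.2.2.1, x.2.2.2.1),
     fun x => (x.2.2.1, x.2.2.2.1, x.2.2.2.2.1, x.2.2.2.2.2, x.1, x.2.1),
     fun x => rfl, fun x => rfl⟩ _ _ (fun x => rfl)

private lemma sum6_tw {ι : Type*} [Fintype ι] (f : ι → ι → ι → ι → ι → ι → ℝ) :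
    (∑ i, ∑ j, ∑ k, ∑ s, ∑ a, ∑ b, f i j k s a b)
      = ∑ i, ∑ j, ∑ k, ∑ s, ∑ a, ∑ b, f s k i j a b := by
  rw [← flat6 f, ← flat6 (fun i j k s a b => f s k i j a b)]
  exact Fintype.sum_equiv
    ⟨fun x : ι × ι × ι × ι × ι × ι => (x.2.2.1, x.2.2.2.1, x.2.1, x.1, x.2.2.2.2.1, x.2.2.2.2.2),
     fun x => (x.2.2.2.1, x.2.2.1, x.1, x.2.1, x.2.2.2.2.1, x.2.2.2.2.2),
     fun x => rfl, fun x => rfl⟩ _ _ (fun x => rfl)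

/-- (Equation 3.4) On a quasi-Kähler manifold with Norden metric,
`τ(P) = -(1/2)‖∇J‖²`. -/
theorem tau_P_eq
    {V : Type*} [AddCommGroup V] [Module ℝ V]
    (g : V →ₗ[ℝ] V →ₗ[ℝ] ℝ) (hg_symm : ∀ x y, g x y = g y x)
    (J : V →ₗ[ℝ] V) (hJ : ∀ x, J (J x) = -x)
    (hgJ : ∀ x y, g (J x) (J y) = -(g x y))
    (N : V →ₗ[ℝ] V →ₗ[ℝ] V)
    (hN1 : ∀ x y z, g (N x y) z = g (N x z) y)
    (hN2 : ∀ x y, N x (J y) = -(J (N x y)))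
    (F : V → V → V → ℝ) (hF : ∀ x y z, F x y z = g (N x y) z)
    (hW3 : ∀ x y z, F x y z + F y z x + F z x y = 0)
    (P : V → V → V → V → ℝ)
    (hP : ∀ x y z w, P x y z w = g (N x z) (N y w) - g (N y z) (N x w))
    {ι : Type*} [Fintype ι] [DecidableEq ι]
    (e : Module.Basis ι ℝ V) (ginv : ι → ι → ℝ)
    (hginv : ∀ i j, ∑ k, ginv i k * g (e k) (e j) = if i = j then 1 else 0)
    (sqNormNablaJ : ℝ)
    (hsqNorm : sqNormNablaJ
      = ∑ i, ∑ j, ∑ k, ∑ s,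
          ginv i j * ginv k s * g (N (e i) (e k)) (N (e j) (e s))) :
    scalarCurv ginv (⇑e) P = -(1/2) * sqNormNablaJ := by
  classical
  -- inverse metric is symmetric
  set G : Matrix ι ι ℝ := Matrix.of (fun i j => g (e i) (e j)) with hG
  set Gi : Matrix ι ι ℝ := Matrix.of ginv with hGi
  have hGiG : Gi * G = 1 := by
    ext i j
    simp only [Matrix.mul_apply, hG, hGi, Matrix.of_apply, Matrix.one_apply]
    exact hginv i j
  have hGGi : G * Gi = 1 := mul_eq_one_comm.mp hGiG
  have hGT : G.transpose = G := by
    ext i j; simp [hG, Matrix.transpose_apply, hg_symm]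
  have hGiT : Gi.transpose = Gi := by
    have h1 : Gi.transpose * G = 1 := by
      have := congrArg Matrix.transpose hGGi
      rwa [Matrix.transpose_mul, hGT, Matrix.transpose_one] at this
    calc Gi.transpose = Gi.transpose * (G * Gi) := by rw [hGGi, Matrix.mul_one]
      _ = (Gi.transpose * G) * Gi := by rw [Matrix.mul_assoc]
      _ = Gi := by rw [h1, Matrix.one_mul]
  have hsG : ∀ i j, ginv i j = ginv j i := by
    intro i j
    have := congrFun (congrFun hGiT j) i
    simpa [hGi, Matrix.transpose_apply] using this
  -- completeness (resolution of the identity)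
  have hcomp : ∀ u v, g u v = ∑ a, ∑ b, g u (e a) * ginv a b * g (e b) v := by
    intro u
    have hbasis : ∀ m, (∑ a, ∑ b, g u (e a) * ginv a b * g (e b) (e m)) = g u (e m) := by
      intro m
      have h1 : ∀ a, (∑ b, g u (e a) * ginv a b * g (e b) (e m))
          = g u (e a) * (if a = m then 1 else 0) := by
        intro a
        rw [← hginv a m, Finset.mul_sum]
        exact Finset.sum_congr rfl (fun b _ => by ring)
      rw [Finset.sum_congr rfl (fun a _ => h1 a)]
      simp
    intro v
    have hmap : (g u) = ∑ a, ∑ b, (g u (e a) * ginv a b) • (g (e b)) := by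
      apply e.ext
      intro m
      simp only [LinearMap.coe_sum, Finset.sum_apply, LinearMap.smul_apply, smul_eq_mul]
      rw [← hbasis m]
    conv_lhs => rw [hmap]
    simp only [LinearMap.coe_sum, Finset.sum_apply, LinearMap.smul_apply, smul_eq_mul]
  -- vanishing of the J-twisted trace
  have htrace0 : ∀ (A : V →ₗ[ℝ] V), (∀ x, A (J x) = -(J (A x))) →
      (∑ k, ∑ s, ginv k s * g (A (e k)) (e s)) = 0 := by
    intro A hA
    set M : Matrix ι ι ℝ := LinearMap.toMatrix e e A with hM
    have step1 : (∑ k, ∑ s, ginv k s * g (A (e k)) (e s)) = Matrix.trace M := by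
      have hAe : ∀ k, A (e k) = ∑ m, M m k • e m := by
        intro k
        rw [hM]
        conv_lhs => rw [← e.sum_repr (A (e k))]
        exact Finset.sum_congr rfl (fun m _ => by rw [LinearMap.toMatrix_apply])
      have h1 : ∀ k s, g (A (e k)) (e s) = ∑ m, M m k * g (e m) (e s) := by
        intro k s
        rw [hAe k]
        simp
      simp only [h1]
      have h4 : ∀ k, (∑ s, ginv k s * ∑ m, M m k * g (e m) (e s)) = M k k := by
        intro k
        have h2 : ∀ s, (ginv k s * ∑ m, M m k * g (e m) (e s))
            = ∑ m, M m k * (ginv k s * g (e s) (e m)) := by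
          intro s
          rw [Finset.mul_sum]
          exact Finset.sum_congr rfl (fun m _ => by rw [hg_symm (e m) (e s)]; ring)
        simp only [h2]
        rw [Finset.sum_comm]
        have h3 : ∀ m, (∑ s, M m k * (ginv k s * g (e s) (e m)))
            = M m k * (if k = m then 1 else 0) := by
          intro m
          rw [← hginv k m, Finset.mul_sum]
        simp only [h3]
        simp
      simp only [h4, Matrix.trace]
      rfl
    have hJAJ : J ∘ₗ A ∘ₗ J = A := by
      apply LinearMap.ext; intro x
      simp [hA x, hJ (A x)]
    have hJJ : J ∘ₗ J = -LinearMap.id := by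
      apply LinearMap.ext; intro x
      simp [hJ x]
    have hMJ : M = LinearMap.toMatrix e e J * M * LinearMap.toMatrix e e J := by
      conv_lhs => rw [hM, ← hJAJ]
      rw [LinearMap.toMatrix_comp e e e, LinearMap.toMatrix_comp e e e, ← hM, Matrix.mul_assoc]
    have htr : Matrix.trace M = -Matrix.trace M := by
      conv_lhs => rw [hMJ]
      rw [Matrix.trace_mul_cycle, ← LinearMap.toMatrix_comp e e e, hJJ]
      simp
    rw [step1]
    linarith
  -- the structure tensor in coordinates
  set T : ι → ι → ι → ℝ := fun a b c => g (N (e a) (e b)) (e c) with hT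
  have hTsym : ∀ a b c, T a b c = T a c b := fun a b c => hN1 _ _ _
  have hTW3 : ∀ a b c, T a b c + T b c a + T c a b = 0 := by
    intro a b c
    have := hW3 (e a) (e b) (e c)
    simpa [hF, hT] using this
  have hneg : ∀ i k a, T i k a + T k i a = -(T a i k) := by
    intro i k a
    have h := hTW3 i k a
    have h2 : T k a i = T k i a := hTsym k a i
    linarith
  have htr0 : ∀ c, (∑ k, ∑ s, ginv k s * T c k s) = 0 := by
    intro c
    exact htrace0 (N (e c)) (fun x => hN2 (e c) x)
  have htr2 : ∀ c, (∑ k, ∑ s, ginv k s * T k s c) = 0 := by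
    intro c
    have h1 : (∑ k, ∑ s, ginv k s * (T k s c + T s c k + T c k s)) = 0 := by
      simp only [hTW3, mul_zero, Finset.sum_const_zero]
    have hd : (∑ k, ∑ s, ginv k s * (T k s c + T s c k + T c k s))
        = (∑ k, ∑ s, ginv k s * T k s c) + (∑ k, ∑ s, ginv k s * T s c k)
          + (∑ k, ∑ s, ginv k s * T c k s) := by
      simp only [mul_add, Finset.sum_add_distrib]
    have h2 : (∑ k, ∑ s, ginv k s * T s c k) = ∑ k, ∑ s, ginv k s * T k s c := by
      have e1 : (∑ k, ∑ s, ginv k s * T s c k) = ∑ k, ∑ s, ginv s k * T s k c := by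
        refine Finset.sum_congr rfl (fun k _ => Finset.sum_congr rfl (fun s _ => ?_))
        rw [hTsym s c k, hsG k s]
      rw [e1, Finset.sum_comm]
    rw [hd, h2, htr0 c] at h1
    linarith
  -- expansion of inner products of N-values
  have gNN : ∀ p q r u, g (N (e p) (e q)) (N (e r) (e u))
      = ∑ a, ∑ b, T p q a * ginv a b * T r u b := by
    intro p q r u
    rw [hcomp (N (e p) (e q)) (N (e r) (e u))]
    refine Finset.sum_congr rfl (fun a _ => Finset.sum_congr rfl (fun b _ => ?_))
    rw [hg_symm (e b) (N (e r) (e u))]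
  -- canonical sums
  set SA : ℝ := ∑ i, ∑ j, ∑ k, ∑ s, ∑ a, ∑ b,
      ginv i j * (ginv k s * (ginv a b * (T i k a * T s j b))) with hSA
  set SB : ℝ := ∑ i, ∑ j, ∑ k, ∑ s, ∑ a, ∑ b,
      ginv i j * (ginv k s * (ginv a b * (T i k a * T j s b))) with hSB
  -- the scalar curvature splits
  have hsplit : scalarCurv ginv (⇑e) P
      = (∑ k, ∑ s, ∑ i, ∑ j, ∑ a, ∑ b,
          ginv k s * (ginv i j * (T i s a * ginv a b * T k j b)))
        - (∑ k, ∑ s, ∑ i, ∑ j, ∑ a, ∑ b,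
          ginv k s * (ginv i j * (T k s a * ginv a b * T i j b))) := by
    simp only [scalarCurv, ricci, hP, gNN, ← Finset.sum_sub_distrib, Finset.mul_sum]
    refine Finset.sum_congr rfl (fun k _ => Finset.sum_congr rfl (fun s _ =>
      Finset.sum_congr rfl (fun i _ => Finset.sum_congr rfl (fun j _ =>
      Finset.sum_congr rfl (fun a _ => Finset.sum_congr rfl (fun b _ => by ring))))))
  -- first piece equals SA
  have hS1 : (∑ k, ∑ s, ∑ i, ∑ j, ∑ a, ∑ b,
      ginv k s * (ginv i j * (T i s a * ginv a b * T k j b))) = SA := by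
    rw [sum6_tw (fun p1 p2 p3 p4 p5 p6 =>
      ginv p1 p2 * (ginv p3 p4 * (T p3 p2 p5 * ginv p5 p6 * T p1 p4 p6))), hSA]
    refine Finset.sum_congr rfl (fun i _ => Finset.sum_congr rfl (fun j _ =>
      Finset.sum_congr rfl (fun k _ => Finset.sum_congr rfl (fun s _ =>
      Finset.sum_congr rfl (fun a _ => Finset.sum_congr rfl (fun b _ => ?_))))))
    rw [hsG s k]; ring
  -- second piece vanishes
  have hS2 : (∑ k, ∑ s, ∑ i, ∑ j, ∑ a, ∑ b,
      ginv k s * (ginv i j * (T k s a * ginv a b * T i j b))) = 0 := by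
    rw [sum6_cycle (fun p1 p2 p3 p4 p5 p6 =>
      ginv p1 p2 * (ginv p3 p4 * (T p1 p2 p5 * ginv p5 p6 * T p3 p4 p6)))]
    refine Finset.sum_eq_zero (fun i _ => Finset.sum_eq_zero (fun j _ => ?_))
    have hfac : ∀ k s, (∑ a, ∑ b, ginv k s * (ginv a b * (T k s i * ginv i j * T a b j)))
        = (ginv k s * T k s i * ginv i j) * (∑ a, ∑ b, ginv a b * T a b j) := by
      intro k s
      rw [Finset.mul_sum]
      refine Finset.sum_congr rfl (fun a _ => ?_)
      rw [Finset.mul_sum]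
      exact Finset.sum_congr rfl (fun b _ => by ring)
    calc (∑ k, ∑ s, ∑ a, ∑ b, ginv k s * (ginv a b * (T k s i * ginv i j * T a b j)))
        = ∑ k, ∑ s, (ginv k s * T k s i * ginv i j) * (∑ a, ∑ b, ginv a b * T a b j) := by
          exact Finset.sum_congr rfl (fun k _ => Finset.sum_congr rfl (fun s _ => hfac k s))
      _ = 0 := by rw [htr2 j]; simp
  -- the key quadratic identity : 2 SA + SB = 0
  have hkey : SB = SB + SA + SA + SB := by
    have hSQ1 : (∑ i, ∑ j, ∑ k, ∑ s, ∑ a, ∑ b,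
        ginv i j * (ginv k s * (ginv a b * ((T i k a + T k i a) * (T j s b + T s j b)))))
        = SB := by
      have step : (∑ i, ∑ j, ∑ k, ∑ s, ∑ a, ∑ b,
          ginv i j * (ginv k s * (ginv a b * ((T i k a + T k i a) * (T j s b + T s j b)))))
          = ∑ i, ∑ j, ∑ k, ∑ s, ∑ a, ∑ b,
            ginv i j * (ginv k s * (ginv a b * (T a i k * T b j s))) := by
        refine Finset.sum_congr rfl (fun i _ => Finset.sum_congr rfl (fun j _ =>
          Finset.sum_congr rfl (fun k _ => Finset.sum_congr rfl (fun s _ =>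
          Finset.sum_congr rfl (fun a _ => Finset.sum_congr rfl (fun b _ => ?_))))))
        rw [hneg i k a, hneg j s b]; ring
      rw [step, sum6_cycle (fun p1 p2 p3 p4 p5 p6 =>
        ginv p1 p2 * (ginv p3 p4 * (ginv p5 p6 * (T p5 p1 p3 * T p6 p2 p4)))), hSB]
      refine Finset.sum_congr rfl (fun i _ => Finset.sum_congr rfl (fun j _ =>
        Finset.sum_congr rfl (fun k _ => Finset.sum_congr rfl (fun s _ =>
        Finset.sum_congr rfl (fun a _ => Finset.sum_congr rfl (fun b _ => by ring))))))
    have hSQ2 : (∑ i, ∑ j, ∑ k, ∑ s, ∑ a, ∑ b,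
        ginv i j * (ginv k s * (ginv a b * ((T i k a + T k i a) * (T j s b + T s j b)))))
        = SB + SA
          + (∑ i, ∑ j, ∑ k, ∑ s, ∑ a, ∑ b,
              ginv i j * (ginv k s * (ginv a b * (T k i a * T j s b))))
          + (∑ i, ∑ j, ∑ k, ∑ s, ∑ a, ∑ b,
              ginv i j * (ginv k s * (ginv a b * (T k i a * T s j b)))) := by
      have step : ∀ (i j k s a b : ι),
          ginv i j * (ginv k s * (ginv a b * ((T i k a + T k i a) * (T j s b + T s j b))))
          = ginv i j * (ginv k s * (ginv a b * (T i k a * T j s b)))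
            + ginv i j * (ginv k s * (ginv a b * (T i k a * T s j b)))
            + ginv i j * (ginv k s * (ginv a b * (T k i a * T j s b)))
            + ginv i j * (ginv k s * (ginv a b * (T k i a * T s j b))) := by
        intro i j k s a b; ring
      simp only [step, Finset.sum_add_distrib]
      rw [hSB, hSA]
    have h3 : (∑ i, ∑ j, ∑ k, ∑ s, ∑ a, ∑ b,
        ginv i j * (ginv k s * (ginv a b * (T k i a * T j s b)))) = SA := by
      rw [sum6_swap (fun p1 p2 p3 p4 p5 p6 =>
        ginv p1 p2 * (ginv p3 p4 * (ginv p5 p6 * (T p3 p1 p5 * T p2 p4 p6)))), hSA]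
      refine Finset.sum_congr rfl (fun i _ => Finset.sum_congr rfl (fun j _ =>
        Finset.sum_congr rfl (fun k _ => Finset.sum_congr rfl (fun s _ =>
        Finset.sum_congr rfl (fun a _ => Finset.sum_congr rfl (fun b _ => by ring))))))
    have h4 : (∑ i, ∑ j, ∑ k, ∑ s, ∑ a, ∑ b,
        ginv i j * (ginv k s * (ginv a b * (T k i a * T s j b)))) = SB := by
      rw [sum6_swap (fun p1 p2 p3 p4 p5 p6 =>
        ginv p1 p2 * (ginv p3 p4 * (ginv p5 p6 * (T p3 p1 p5 * T p4 p2 p6)))), hSB]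
      refine Finset.sum_congr rfl (fun i _ => Finset.sum_congr rfl (fun j _ =>
        Finset.sum_congr rfl (fun k _ => Finset.sum_congr rfl (fun s _ =>
        Finset.sum_congr rfl (fun a _ => Finset.sum_congr rfl (fun b _ => by ring))))))
    rw [h3, h4] at hSQ2
    exact hSQ1.symm.trans hSQ2
  -- the square norm equals SB
  have hsq : sqNormNablaJ = SB := by
    rw [hsqNorm, hSB]
    refine Finset.sum_congr rfl (fun i _ => Finset.sum_congr rfl (fun j _ =>
      Finset.sum_congr rfl (fun k _ => Finset.sum_congr rfl (fun s _ => ?_))))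
    rw [gNN, Finset.mul_sum]
    refine Finset.sum_congr rfl (fun a _ => ?_)
    rw [Finset.mul_sum]
    exact Finset.sum_congr rfl (fun b _ => by ring)
  rw [hsplit, hS1, hS2, hsq]
  linarith
end

section
/- (Equation 3.5) Assume the quasi-Kähler (class W₃) condition, let R be a quadrilinear form on V, and assume the identity τ(R) + τ** = -(1/2)‖∇J‖² (valid on quasi-Kähler manifolds with Norden metric), where τ** = Σ g^{ij} g^{ks} R(e_i, e_k, J e_s, J e_j) and ‖∇J‖² = Σ g^{ij} g^{ks} g(N(e_i,e_k), N(e_j,e_s)). Then τ(R) = τ(K) - (1/8)‖∇J‖², where K(x,y,z,w) = (1/4)(2R(x,y,z,w) - 2R(x,y,Jz,Jw) + P(x,y,z,w)). -/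
section AuxSums

variable {ι : Type*} [Fintype ι]

private lemma sum4_congr (F G : ι → ι → ι → ι → ℝ)
    (h : ∀ i j k l, F i j k l = G i j k l) :
    (∑ i, ∑ j, ∑ k, ∑ l, F i j k l) = ∑ i, ∑ j, ∑ k, ∑ l, G i j k l := by
  simp_rw [h]

private lemma sum4_comm (F : ι → ι → ι → ι → ℝ) :
    (∑ i, ∑ j, ∑ k, ∑ l, F i j k l) = ∑ k, ∑ l, ∑ i, ∑ j, F i j k l := by
  calc (∑ i, ∑ j, ∑ k, ∑ l, F i j k l)
      = ∑ i, ∑ k, ∑ j, ∑ l, F i j k l :=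
        Finset.sum_congr rfl fun i _ => Finset.sum_comm
    _ = ∑ k, ∑ i, ∑ j, ∑ l, F i j k l := Finset.sum_comm
    _ = ∑ k, ∑ i, ∑ l, ∑ j, F i j k l :=
        Finset.sum_congr rfl fun k _ => Finset.sum_congr rfl fun i _ => Finset.sum_comm
    _ = ∑ k, ∑ l, ∑ i, ∑ j, F i j k l :=
        Finset.sum_congr rfl fun k _ => Finset.sum_comm

private lemma sum_mul_swap (a b : ι → ι → ℝ) (C : ι → ι → ι → ι → ℝ) :
    (∑ i, ∑ j, a i j * ∑ k, ∑ l, b k l * C i j k l)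
    = ∑ k, ∑ l, b k l * ∑ i, ∑ j, a i j * C i j k l := by
  simp_rw [Finset.mul_sum]
  rw [sum4_comm (fun i j k l => a i j * (b k l * C i j k l))]
  exact sum4_congr _ _ (by intros; ring)

private lemma sum3_rot (A : ι → ι → ι → ℝ) :
    (∑ i, ∑ j, ∑ t, A i j t) = ∑ t, ∑ i, ∑ j, A i j t := by
  calc (∑ i, ∑ j, ∑ t, A i j t)
      = ∑ i, ∑ t, ∑ j, A i j t := Finset.sum_congr rfl fun i _ => Finset.sum_comm
    _ = ∑ t, ∑ i, ∑ j, A i j t := Finset.sum_comm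

private noncomputable def con6 (w : ι → ι → ℝ) (f : ι → ι → ι → ι → ι → ι → ℝ) : ℝ :=
  ∑ p, ∑ q, w p q * ∑ r, ∑ t, w r t * ∑ u, ∑ v, w u v * f p q r t u v

private lemma con6_congr (w : ι → ι → ℝ) (f h : ι → ι → ι → ι → ι → ι → ℝ)
    (H : ∀ p q r t u v, f p q r t u v = h p q r t u v) : con6 w f = con6 w h := by
  unfold con6; simp_rw [H]

private lemma con6_add (w : ι → ι → ℝ) (f h : ι → ι → ι → ι → ι → ι → ℝ) :
    con6 w (fun p q r t u v => f p q r t u v + h p q r t u v) = con6 w f + con6 w h := by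
  unfold con6; simp only [mul_add, Finset.sum_add_distrib]

private lemma con6_neg (w : ι → ι → ℝ) (f : ι → ι → ι → ι → ι → ι → ℝ) :
    con6 w (fun p q r t u v => -(f p q r t u v)) = -(con6 w f) := by
  unfold con6; simp only [mul_neg, Finset.sum_neg_distrib]

private lemma con6_perm12 (w : ι → ι → ℝ) (f : ι → ι → ι → ι → ι → ι → ℝ) :
    con6 w f = con6 w (fun p q r t u v => f r t p q u v) := by
  unfold con6
  exact sum_mul_swap w w (fun p q r t => ∑ u, ∑ v, w u v * f p q r t u v)

private lemma con6_perm23 (w : ι → ι → ℝ) (f : ι → ι → ι → ι → ι → ι → ℝ) :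
    con6 w f = con6 w (fun p q r t u v => f p q u v r t) := by
  unfold con6
  refine Finset.sum_congr rfl fun p _ => Finset.sum_congr rfl fun q _ => ?_
  congr 1
  exact sum_mul_swap w w (fun r t u v => f p q r t u v)

private lemma con6_perm13 (w : ι → ι → ℝ) (f : ι → ι → ι → ι → ι → ι → ℝ) :
    con6 w f = con6 w (fun p q r t u v => f u v r t p q) := by
  rw [con6_perm23 w f, con6_perm12, con6_perm23]

private lemma con6_swap2 (w : ι → ι → ℝ) (hw : ∀ i j, w i j = w j i)
    (f : ι → ι → ι → ι → ι → ι → ℝ) :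
    con6 w f = con6 w (fun p q r t u v => f p q t r u v) := by
  unfold con6
  refine Finset.sum_congr rfl fun p _ => Finset.sum_congr rfl fun q _ => ?_
  congr 1
  rw [Finset.sum_comm]
  exact Finset.sum_congr rfl fun r _ => Finset.sum_congr rfl fun t _ => by rw [hw]

end AuxSums

private noncomputable def GG {V : Type*} [AddCommGroup V] [Module ℝ V]
    (g : V →ₗ[ℝ] V →ₗ[ℝ] ℝ) (N : V →ₗ[ℝ] V →ₗ[ℝ] V) (x y z : V) : ℝ :=
  g (N x y) z + g (N y x) z

set_option maxHeartbeats 1600000 in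
/-- (Equation 3.5) On a quasi-Kähler manifold with Norden metric,
`τ = τ(K) - (1/8)‖∇J‖²`. -/
theorem tau_eq_tauK_sub
    {V : Type*} [AddCommGroup V] [Module ℝ V]
    (g : V →ₗ[ℝ] V →ₗ[ℝ] ℝ) (hg_symm : ∀ x y, g x y = g y x)
    (J : V →ₗ[ℝ] V) (hJ : ∀ x, J (J x) = -x)
    (hgJ : ∀ x y, g (J x) (J y) = -(g x y))
    (N : V →ₗ[ℝ] V →ₗ[ℝ] V)
    (hN1 : ∀ x y z, g (N x y) z = g (N x z) y)
    (hN2 : ∀ x y, N x (J y) = -(J (N x y)))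
    (F : V → V → V → ℝ) (hF : ∀ x y z, F x y z = g (N x y) z)
    (hW3 : ∀ x y z, F x y z + F y z x + F z x y = 0)
    (P : V → V → V → V → ℝ)
    (hP : ∀ x y z w, P x y z w = g (N x z) (N y w) - g (N y z) (N x w))
    {ι : Type*} [Fintype ι] [DecidableEq ι]
    (e : Module.Basis ι ℝ V) (ginv : ι → ι → ℝ)
    (hginv : ∀ i j, ∑ k, ginv i k * g (e k) (e j) = if i = j then 1 else 0)
    (R : V → V → V → V → ℝ)
    (K : V → V → V → V → ℝ)
    (hK : ∀ x y z w, K x y z w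
      = (1/4) * (2 * R x y z w - 2 * R x y (J z) (J w) + P x y z w))
    (tauStarStar : ℝ)
    (hTauStarStar : tauStarStar
      = ∑ i, ∑ j, ∑ k, ∑ s,
          ginv i j * ginv k s * R (e i) (e k) (J (e s)) (J (e j)))
    (sqNormNablaJ : ℝ)
    (hsqNorm : sqNormNablaJ
      = ∑ i, ∑ j, ∑ k, ∑ s,
          ginv i j * ginv k s * g (N (e i) (e k)) (N (e j) (e s)))
    (hTau : scalarCurv ginv (⇑e) R + tauStarStar = -(1/2) * sqNormNablaJ) :
    scalarCurv ginv (⇑e) R = scalarCurv ginv (⇑e) K - (1/8) * sqNormNablaJ := by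
  classical
  -- Part 0 : symmetry of ginv
  have wsymm : ∀ i j, ginv i j = ginv j i := by
    have h1 : (Matrix.of ginv) * (Matrix.of fun i j => g (e i) (e j)) = 1 := by
      ext i j
      simpa [Matrix.mul_apply, Matrix.one_apply] using hginv i j
    have h2 : (Matrix.of fun i j => g (e i) (e j)) * (Matrix.of ginv) = 1 :=
      mul_eq_one_comm.mp h1
    have hG : Matrix.transpose (Matrix.of fun i j => g (e i) (e j))
        = Matrix.of fun i j => g (e i) (e j) := by
      ext i j
      exact hg_symm (e j) (e i)
    have h3 : (Matrix.transpose (Matrix.of ginv)) * (Matrix.of fun i j => g (e i) (e j)) = 1 := by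
      have h := congrArg Matrix.transpose h2
      rw [Matrix.transpose_mul, Matrix.transpose_one, hG] at h
      exact h
    have h4 : Matrix.transpose (Matrix.of ginv) = Matrix.of ginv := by
      calc Matrix.transpose (Matrix.of ginv)
          = (Matrix.transpose (Matrix.of ginv))
            * ((Matrix.of fun i j => g (e i) (e j)) * (Matrix.of ginv)) := by
            rw [h2, Matrix.mul_one]
        _ = ((Matrix.transpose (Matrix.of ginv)) * (Matrix.of fun i j => g (e i) (e j)))
            * (Matrix.of ginv) := by
            rw [Matrix.mul_assoc]
        _ = Matrix.of ginv := by rw [h3, Matrix.one_mul]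
    intro i j
    have h5 := congrFun (congrFun h4 i) j
    simpa [Matrix.transpose_apply] using h5.symm
  have hWG' : ∀ j t, (∑ i, ginv i j * g (e i) (e t)) = if j = t then 1 else 0 := by
    intro j t
    calc (∑ i, ginv i j * g (e i) (e t)) = ∑ i, ginv j i * g (e i) (e t) :=
          Finset.sum_congr rfl fun i _ => by rw [wsymm]
      _ = if j = t then 1 else 0 := hginv j t
  -- Part 1 : pointwise identities
  have pJg : ∀ x y, g (J x) y = g x (J y) := by
    intro x y
    have h := hgJ x (J y)
    rw [hJ y] at h
    simpa using h
  have pFJ : ∀ x y z, g (N x (J y)) z = -(g (N x y) (J z)) := by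
    intro x y z
    rw [hN2]
    simp only [map_neg, LinearMap.neg_apply, neg_inj]
    rw [pJg]
  have pW3 : ∀ x y z, g (N x y) z + g (N y z) x + g (N z x) y = 0 := by
    intro x y z
    have h := hW3 x y z
    simpa [hF] using h
  have pFG : ∀ x y z, GG g N y z x = -(g (N x y) z) := by
    intro x y z
    have h := pW3 x y z
    have h2 : g (N z x) y = g (N z y) x := hN1 z x y
    simp only [GG]
    linarith
  have pG2 : ∀ x y z, GG g N (J x) y z = -(GG g N x (J y) z) := by
    intro x y z
    have h1 := pFG z (J x) y
    have h2 := pFJ z x y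
    have h3 := pFG z x (J y)
    linarith
  have pG4 : ∀ x y z, GG g N x y (J z) = GG g N (J y) z x + GG g N (J x) z y := by
    intro x y z
    have h1 := pFJ x y z
    have h2 := pFJ y x z
    have h3 := pFG x (J y) z
    have h4 := pFG y (J x) z
    simp only [GG] at h3 h4 ⊢
    linarith
  have pG11 : ∀ x y z, GG g N (J x) y (J z) + GG g N (J x) z (J y) = GG g N y z x := by
    intro x y z
    have h1 := pG2 x y (J z)
    have h2 := pG4 x (J y) z
    rw [hJ y] at h2
    have h3 : GG g N (-y) z x = -(GG g N y z x) := by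
      simp only [GG, map_neg, LinearMap.neg_apply]
      ring
    linarith
  have pGJJ : ∀ x y z, GG g N (J x) (J y) z = GG g N x y z := by
    intro x y z
    have h1 := pG2 x (J y) z
    rw [hJ y] at h1
    have h2 : GG g N x (-y) z = -(GG g N x y z) := by
      simp only [GG, map_neg, LinearMap.neg_apply]
      ring
    linarith
  have lin1 : ∀ y z, IsLinearMap ℝ (fun x => GG g N x y z) := by
    intro y z
    constructor
    · intro a b; simp only [GG, map_add, LinearMap.add_apply]; ring
    · intro c a; simp only [GG, map_smul, LinearMap.smul_apply, smul_eq_mul]; ring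
  have lin2 : ∀ x z, IsLinearMap ℝ (fun y => GG g N x y z) := by
    intro x z
    constructor
    · intro a b; simp only [GG, map_add, LinearMap.add_apply]; ring
    · intro c a; simp only [GG, map_smul, LinearMap.smul_apply, smul_eq_mul]; ring
  have lin3 : ∀ x y, IsLinearMap ℝ (fun z => GG g N x y z) := by
    intro x y
    constructor
    · intro a b; simp only [GG, map_add, LinearMap.add_apply]; ring
    · intro c a; simp only [GG, map_smul, LinearMap.smul_apply, smul_eq_mul]; ring
  -- Part 2 : completeness and moves
  have linsum : ∀ (ψ : V → ℝ), IsLinearMap ℝ ψ → ∀ (c : ι → ℝ),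
      ψ (∑ t, c t • e t) = ∑ t, c t * ψ (e t) := by
    intro ψ hψ c
    show (IsLinearMap.mk' ψ hψ) (∑ t, c t • e t) = ∑ t, c t * (IsLinearMap.mk' ψ hψ) (e t)
    rw [map_sum]
    refine Finset.sum_congr rfl fun t _ => ?_
    rw [map_smul]
    simp [smul_eq_mul]
  have compl : ∀ (ψ : V → ℝ), IsLinearMap ℝ ψ → ∀ x,
      (∑ i, ∑ j, ginv i j * (g (e i) x * ψ (e j))) = ψ x := by
    intro ψ hψ x
    have hx := Module.Basis.sum_repr e x
    have hgi : ∀ i, g (e i) x = ∑ t, e.repr x t * g (e i) (e t) := by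
      intro i
      conv_lhs => rw [← hx]
      simp only [map_sum, map_smul, smul_eq_mul]
    have inner : ∀ t, (∑ i, ∑ j, ginv i j * (e.repr x t * g (e i) (e t) * ψ (e j)))
        = e.repr x t * ψ (e t) := by
      intro t
      rw [Finset.sum_comm]
      calc (∑ j, ∑ i, ginv i j * (e.repr x t * g (e i) (e t) * ψ (e j)))
          = ∑ j, (e.repr x t * ψ (e j)) * (∑ i, ginv i j * g (e i) (e t)) := by
            refine Finset.sum_congr rfl fun j _ => ?_
            rw [Finset.mul_sum]
            exact Finset.sum_congr rfl fun i _ => by ring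
        _ = ∑ j, (e.repr x t * ψ (e j)) * (if j = t then 1 else 0) := by
            refine Finset.sum_congr rfl fun j _ => by rw [hWG']
        _ = e.repr x t * ψ (e t) := by
            simp [mul_ite, Finset.sum_ite_eq']
    calc (∑ i, ∑ j, ginv i j * (g (e i) x * ψ (e j)))
        = ∑ i, ∑ j, ∑ t, ginv i j * (e.repr x t * g (e i) (e t) * ψ (e j)) := by
          refine Finset.sum_congr rfl fun i _ => Finset.sum_congr rfl fun j _ => ?_
          rw [hgi i, Finset.sum_mul, Finset.mul_sum]
      _ = ∑ t, ∑ i, ∑ j, ginv i j * (e.repr x t * g (e i) (e t) * ψ (e j)) := sum3_rot _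
      _ = ∑ t, e.repr x t * ψ (e t) := Finset.sum_congr rfl fun t _ => inner t
      _ = ψ x := by rw [← linsum ψ hψ (fun t => e.repr x t)]; rw [hx]
  have gsplit : ∀ x y, g x y = ∑ a, ∑ b, ginv a b * (g x (e a) * g (e b) y) := by
    intro x y
    have hlin : IsLinearMap ℝ (fun z => g x z) := by
      constructor
      · intro a b; simp
      · intro c a; simp
    have h := compl (fun z => g x z) hlin y
    rw [← h]
    rw [Finset.sum_comm]
    refine Finset.sum_congr rfl fun i _ => Finset.sum_congr rfl fun j _ => ?_
    rw [wsymm]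
    ring
  have move2 : ∀ (β : V → V → ℝ), (∀ b, IsLinearMap ℝ (fun a => β a b)) →
      (∀ a, IsLinearMap ℝ (fun b => β a b)) →
      (∑ i, ∑ j, ginv i j * β (J (e i)) (e j))
        = ∑ i, ∑ j, ginv i j * β (e i) (J (e j)) := by
    intro β h1 h2
    calc (∑ i, ∑ j, ginv i j * β (J (e i)) (e j))
        = ∑ i, ∑ j, ginv i j * ∑ a, ∑ b, ginv a b * (g (e a) (J (e i)) * β (e b) (e j)) := by
          refine Finset.sum_congr rfl fun i _ => Finset.sum_congr rfl fun j _ => ?_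
          rw [compl (fun a => β a (e j)) (h1 (e j)) (J (e i))]
      _ = ∑ a, ∑ b, ginv a b * ∑ i, ∑ j, ginv i j * (g (e a) (J (e i)) * β (e b) (e j)) :=
          sum_mul_swap ginv ginv _
      _ = ∑ a, ∑ b, ginv a b * ∑ i, ∑ j, ginv i j * (g (e i) (J (e a)) * β (e b) (e j)) := by
          refine Finset.sum_congr rfl fun a _ => Finset.sum_congr rfl fun b _ => ?_
          congr 1
          refine Finset.sum_congr rfl fun i _ => Finset.sum_congr rfl fun j _ => ?_
          rw [hg_symm (e a) (J (e i)), pJg]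
      _ = ∑ a, ∑ b, ginv a b * β (e b) (J (e a)) := by
          refine Finset.sum_congr rfl fun a _ => Finset.sum_congr rfl fun b _ => ?_
          rw [compl (fun c => β (e b) c) (h2 (e b)) (J (e a))]
      _ = ∑ i, ∑ j, ginv i j * β (e i) (J (e j)) := by
          rw [Finset.sum_comm]
          refine Finset.sum_congr rfl fun i _ => Finset.sum_congr rfl fun j _ => ?_
          rw [wsymm]
  have hmove : ∀ (A B : ι → ι → ι → ι → (V → ℝ)),
      (∀ p q r t, IsLinearMap ℝ (A p q r t)) → (∀ p q r t, IsLinearMap ℝ (B p q r t)) →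
      con6 ginv (fun p q r t u v => A p q r t (J (e u)) * B p q r t (e v))
        = con6 ginv (fun p q r t u v => A p q r t (e u) * B p q r t (J (e v))) := by
    intro A B hA hB
    simp only [con6]
    refine Finset.sum_congr rfl fun p _ => Finset.sum_congr rfl fun q _ => ?_
    congr 1
    refine Finset.sum_congr rfl fun r _ => Finset.sum_congr rfl fun t _ => ?_
    congr 1
    have hβ1 : ∀ b, IsLinearMap ℝ (fun a => A p q r t a * B p q r t b) := by
      intro b
      constructor
      · intro m n
        show A p q r t (m + n) * B p q r t b
          = A p q r t m * B p q r t b + A p q r t n * B p q r t b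
        rw [(hA p q r t).map_add]; ring
      · intro c m
        show A p q r t (c • m) * B p q r t b = c • (A p q r t m * B p q r t b)
        rw [(hA p q r t).map_smul]; simp only [smul_eq_mul]; ring
    have hβ2 : ∀ a, IsLinearMap ℝ (fun b => A p q r t a * B p q r t b) := by
      intro a
      constructor
      · intro m n
        show A p q r t a * B p q r t (m + n)
          = A p q r t a * B p q r t m + A p q r t a * B p q r t n
        rw [(hB p q r t).map_add]; ring
      · intro c m
        show A p q r t a * B p q r t (c • m) = c • (A p q r t a * B p q r t m)
        rw [(hB p q r t).map_smul]; simp only [smul_eq_mul]; ring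
    exact move2 (fun a b => A p q r t a * B p q r t b) hβ1 hβ2
  -- Part 3 : trace vanishing
  have t0 : ∀ z, (∑ i, ∑ j, ginv i j * g (N z (e i)) (e j)) = 0 := by
    intro z
    have e1 : ∀ (a b : V), g (N z (J a)) (J b) = g (N z a) b := by
      intro a b
      rw [hN2]
      simp only [map_neg, LinearMap.neg_apply]
      rw [hgJ]
      ring
    have linA : ∀ b, IsLinearMap ℝ (fun a => g (N z a) (J b)) := by
      intro b
      constructor
      · intro m n; simp [map_add]
      · intro c m; simp [map_smul, smul_eq_mul]
    have linB : ∀ a, IsLinearMap ℝ (fun b => g (N z a) (J b)) := by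
      intro a
      constructor
      · intro m n; simp [map_add]
      · intro c m; simp [map_smul, smul_eq_mul]
    have h := move2 (fun a b => g (N z a) (J b)) linA linB
    -- h : ∑∑ ginv i j * g (N z (J e i)) (J (e j)) = ∑∑ ginv i j * g (N z (e i)) (J (J (e j)))
    have h2 : (∑ i, ∑ j, ginv i j * g (N z (J (e i))) (J (e j)))
        = ∑ i, ∑ j, ginv i j * g (N z (e i)) (e j) := by
      refine Finset.sum_congr rfl fun i _ => Finset.sum_congr rfl fun j _ => ?_
      rw [e1]
    have h3 : (∑ i, ∑ j, ginv i j * g (N z (e i)) (J (J (e j))))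
        = -(∑ i, ∑ j, ginv i j * g (N z (e i)) (e j)) := by
      rw [← Finset.sum_neg_distrib]
      refine Finset.sum_congr rfl fun i _ => ?_
      rw [← Finset.sum_neg_distrib]
      refine Finset.sum_congr rfl fun j _ => ?_
      rw [hJ]
      simp
    rw [h2, h3] at h
    linarith
  have tvec : ∀ z, (∑ i, ∑ j, ginv i j * g (N (e i) (e j)) z) = 0 := by
    intro z
    have hcyc : ∀ i j, g (N (e i) (e j)) z
        = -(g (N (e j) (e i)) z) - g (N z (e i)) (e j) := by
      intro i j
      have h := pW3 (e i) (e j) z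
      have h2 : g (N (e j) z) (e i) = g (N (e j) (e i)) z := hN1 (e j) z (e i)
      linarith
    have hswap : (∑ i, ∑ j, ginv i j * g (N (e j) (e i)) z)
        = ∑ i, ∑ j, ginv i j * g (N (e i) (e j)) z := by
      rw [Finset.sum_comm]
      refine Finset.sum_congr rfl fun i _ => Finset.sum_congr rfl fun j _ => ?_
      rw [wsymm]
    have hexp : (∑ i, ∑ j, ginv i j * g (N (e i) (e j)) z)
        = -(∑ i, ∑ j, ginv i j * g (N (e j) (e i)) z)
          - (∑ i, ∑ j, ginv i j * g (N z (e i)) (e j)) := by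
      simp only [← Finset.sum_neg_distrib, ← Finset.sum_sub_distrib]
      refine Finset.sum_congr rfl fun i _ => Finset.sum_congr rfl fun j _ => ?_
      rw [hcyc i j]
      ring
    rw [hswap, t0 z] at hexp
    linarith
  -- Part 4 : the contraction identity
  set SC := con6 ginv (fun p q r t u v => g (N (e p) (e r)) (e u) * g (N (e q) (e t)) (e v)) with hSCdef
  set TC := con6 ginv (fun p q r t u v => g (N (e p) (e r)) (e u) * g (N (e t) (e q)) (e v)) with hTCdef
  have x1a : con6 ginv (fun p q r t u v => g (N (e p) (e r)) (e u) * g (N (e t) (e v)) (e q))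
      = TC := by
    rw [hTCdef]
    exact con6_congr _ _ _ (fun p q r t u v => by rw [hN1 (e t) (e v) (e q)])
  have x1b : con6 ginv (fun p q r t u v => g (N (e r) (e p)) (e u) * g (N (e t) (e v)) (e q))
      = SC := by
    calc con6 ginv (fun p q r t u v => g (N (e r) (e p)) (e u) * g (N (e t) (e v)) (e q))
        = con6 ginv (fun p q r t u v => g (N (e p) (e r)) (e u) * g (N (e q) (e v)) (e t)) := by
          rw [con6_perm12 ginv
            (fun p q r t u v => g (N (e r) (e p)) (e u) * g (N (e t) (e v)) (e q))]
      _ = SC := by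
          rw [hSCdef]
          exact con6_congr _ _ _ (fun p q r t u v => by rw [hN1 (e q) (e v) (e t)])
  have x1c : con6 ginv (fun p q r t u v => g (N (e p) (e r)) (e u) * g (N (e v) (e t)) (e q))
      = TC := by
    calc con6 ginv (fun p q r t u v => g (N (e p) (e r)) (e u) * g (N (e v) (e t)) (e q))
        = con6 ginv (fun p q r t u v => g (N (e p) (e u)) (e r) * g (N (e v) (e q)) (e t)) :=
          con6_congr _ _ _
            (fun p q r t u v => by rw [hN1 (e p) (e r) (e u), hN1 (e v) (e t) (e q)])
      _ = con6 ginv (fun p q r t u v => g (N (e p) (e r)) (e u) * g (N (e t) (e q)) (e v)) := by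
          rw [con6_perm23 ginv
            (fun p q r t u v => g (N (e p) (e u)) (e r) * g (N (e v) (e q)) (e t))]
      _ = TC := hTCdef.symm
  have x1d : con6 ginv (fun p q r t u v => g (N (e r) (e p)) (e u) * g (N (e v) (e t)) (e q))
      = TC := by
    calc con6 ginv (fun p q r t u v => g (N (e r) (e p)) (e u) * g (N (e v) (e t)) (e q))
        = con6 ginv (fun p q r t u v => g (N (e r) (e u)) (e p) * g (N (e v) (e t)) (e q)) :=
          con6_congr _ _ _ (fun p q r t u v => by rw [hN1 (e r) (e p) (e u)])
      _ = con6 ginv (fun p q r t u v => g (N (e p) (e u)) (e r) * g (N (e v) (e q)) (e t)) := by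
          rw [con6_perm12 ginv
            (fun p q r t u v => g (N (e r) (e u)) (e p) * g (N (e v) (e t)) (e q))]
      _ = con6 ginv (fun p q r t u v => g (N (e p) (e r)) (e u) * g (N (e t) (e q)) (e v)) := by
          rw [con6_perm23 ginv
            (fun p q r t u v => g (N (e p) (e u)) (e r) * g (N (e v) (e q)) (e t))]
      _ = TC := hTCdef.symm
  have hX1 : con6 ginv (fun p q r t u v => GG g N (e p) (e r) (e u) * GG g N (e t) (e v) (e q))
      = SC + 3 * TC := by
    have step1 : con6 ginv (fun p q r t u v => GG g N (e p) (e r) (e u) * GG g N (e t) (e v) (e q))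
        = con6 ginv (fun p q r t u v =>
            (g (N (e p) (e r)) (e u) * g (N (e t) (e v)) (e q)
              + g (N (e r) (e p)) (e u) * g (N (e t) (e v)) (e q))
            + (g (N (e p) (e r)) (e u) * g (N (e v) (e t)) (e q)
              + g (N (e r) (e p)) (e u) * g (N (e v) (e t)) (e q))) :=
      con6_congr _ _ _ (fun p q r t u v => by simp only [GG]; ring)
    rw [step1, con6_add, con6_add, con6_add, x1a, x1b, x1c, x1d]
    ring
  have x2a : con6 ginv (fun p q r t u v => g (N (e r) (e p)) (e u) * g (N (e v) (e q)) (e t))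
      = TC := by
    calc con6 ginv (fun p q r t u v => g (N (e r) (e p)) (e u) * g (N (e v) (e q)) (e t))
        = con6 ginv (fun p q r t u v => g (N (e r) (e u)) (e p) * g (N (e v) (e q)) (e t)) :=
          con6_congr _ _ _ (fun p q r t u v => by rw [hN1 (e r) (e p) (e u)])
      _ = con6 ginv (fun p q r t u v => g (N (e r) (e p)) (e u) * g (N (e q) (e v)) (e t)) := by
          rw [con6_perm13 ginv
            (fun p q r t u v => g (N (e r) (e u)) (e p) * g (N (e v) (e q)) (e t))]
      _ = con6 ginv (fun p q r t u v => g (N (e p) (e r)) (e u) * g (N (e t) (e v)) (e q)) := by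
          rw [con6_perm12 ginv
            (fun p q r t u v => g (N (e r) (e p)) (e u) * g (N (e q) (e v)) (e t))]
      _ = TC := x1a
  have x2b : con6 ginv (fun p q r t u v => g (N (e p) (e r)) (e u) * g (N (e v) (e q)) (e t))
      = TC := by
    calc con6 ginv (fun p q r t u v => g (N (e p) (e r)) (e u) * g (N (e v) (e q)) (e t))
        = con6 ginv (fun p q r t u v => g (N (e p) (e u)) (e r) * g (N (e v) (e q)) (e t)) :=
          con6_congr _ _ _ (fun p q r t u v => by rw [hN1 (e p) (e r) (e u)])
      _ = con6 ginv (fun p q r t u v => g (N (e p) (e r)) (e u) * g (N (e t) (e q)) (e v)) := by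
          rw [con6_perm23 ginv
            (fun p q r t u v => g (N (e p) (e u)) (e r) * g (N (e v) (e q)) (e t))]
      _ = TC := hTCdef.symm
  have x2c : con6 ginv (fun p q r t u v => g (N (e r) (e p)) (e u) * g (N (e q) (e v)) (e t))
      = TC := by
    calc con6 ginv (fun p q r t u v => g (N (e r) (e p)) (e u) * g (N (e q) (e v)) (e t))
        = con6 ginv (fun p q r t u v => g (N (e p) (e r)) (e u) * g (N (e t) (e v)) (e q)) := by
          rw [con6_perm12 ginv
            (fun p q r t u v => g (N (e r) (e p)) (e u) * g (N (e q) (e v)) (e t))]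
      _ = TC := x1a
  have x2d : con6 ginv (fun p q r t u v => g (N (e p) (e r)) (e u) * g (N (e q) (e v)) (e t))
      = SC := by
    rw [hSCdef]
    exact con6_congr _ _ _ (fun p q r t u v => by rw [hN1 (e q) (e v) (e t)])
  have hX2 : con6 ginv (fun p q r t u v => GG g N (e r) (e p) (e u) * GG g N (e v) (e q) (e t))
      = SC + 3 * TC := by
    have step1 : con6 ginv (fun p q r t u v => GG g N (e r) (e p) (e u) * GG g N (e v) (e q) (e t))
        = con6 ginv (fun p q r t u v =>
            (g (N (e r) (e p)) (e u) * g (N (e v) (e q)) (e t)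
              + g (N (e p) (e r)) (e u) * g (N (e v) (e q)) (e t))
            + (g (N (e r) (e p)) (e u) * g (N (e q) (e v)) (e t)
              + g (N (e p) (e r)) (e u) * g (N (e q) (e v)) (e t))) :=
      con6_congr _ _ _ (fun p q r t u v => by simp only [GG]; ring)
    rw [step1, con6_add, con6_add, con6_add, x2a, x2b, x2c, x2d]
    ring
  have hAid1 : con6 ginv (fun p q r t u v => GG g N (e p) (e r) (e u) * GG g N (e q) (e t) (e v))
      = 2 * SC + 2 * TC := by
    have a2 : con6 ginv (fun p q r t u v => g (N (e r) (e p)) (e u) * g (N (e q) (e t)) (e v))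
        = TC := by
      calc con6 ginv (fun p q r t u v => g (N (e r) (e p)) (e u) * g (N (e q) (e t)) (e v))
          = con6 ginv (fun p q r t u v => g (N (e p) (e r)) (e u) * g (N (e t) (e q)) (e v)) := by
            rw [con6_perm12 ginv
              (fun p q r t u v => g (N (e r) (e p)) (e u) * g (N (e q) (e t)) (e v))]
        _ = TC := hTCdef.symm
    have a4 : con6 ginv (fun p q r t u v => g (N (e r) (e p)) (e u) * g (N (e t) (e q)) (e v))
        = SC := by
      calc con6 ginv (fun p q r t u v => g (N (e r) (e p)) (e u) * g (N (e t) (e q)) (e v))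
          = con6 ginv (fun p q r t u v => g (N (e p) (e r)) (e u) * g (N (e q) (e t)) (e v)) := by
            rw [con6_perm12 ginv
              (fun p q r t u v => g (N (e r) (e p)) (e u) * g (N (e t) (e q)) (e v))]
        _ = SC := hSCdef.symm
    have step1 : con6 ginv (fun p q r t u v => GG g N (e p) (e r) (e u) * GG g N (e q) (e t) (e v))
        = con6 ginv (fun p q r t u v =>
            (g (N (e p) (e r)) (e u) * g (N (e q) (e t)) (e v)
              + g (N (e r) (e p)) (e u) * g (N (e q) (e t)) (e v))
            + (g (N (e p) (e r)) (e u) * g (N (e t) (e q)) (e v)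
              + g (N (e r) (e p)) (e u) * g (N (e t) (e q)) (e v))) :=
      con6_congr _ _ _ (fun p q r t u v => by simp only [GG]; ring)
    rw [step1, con6_add, con6_add, con6_add, a2, a4, ← hSCdef, ← hTCdef]
    ring
  have hL1 : con6 ginv (fun p q r t u v => GG g N (J (e u)) (e p) (J (e r)) * GG g N (e q) (e t) (e v))
      = -(SC + 3 * TC) := by
    have chain : con6 ginv (fun p q r t u v =>
        GG g N (e u) (J (e p)) (J (e r)) * GG g N (e q) (e t) (e v))
        = con6 ginv (fun p q r t u v => GG g N (e p) (e r) (e u) * GG g N (e t) (e v) (e q)) := by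
      calc con6 ginv (fun p q r t u v =>
              GG g N (e u) (J (e p)) (J (e r)) * GG g N (e q) (e t) (e v))
          = con6 ginv (fun p q r t u v =>
              GG g N (e p) (J (e u)) (J (e r)) * GG g N (e v) (e t) (e q)) := by
            rw [con6_perm13 ginv (fun p q r t u v =>
              GG g N (e u) (J (e p)) (J (e r)) * GG g N (e q) (e t) (e v))]
        _ = con6 ginv (fun p q r t u v =>
              GG g N (e p) (e u) (J (e r)) * GG g N (J (e v)) (e t) (e q)) :=
            hmove (fun p q r t => fun a => GG g N (e p) a (J (e r)))
              (fun p q r t => fun b => GG g N b (e t) (e q))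
              (fun p q r t => lin2 (e p) (J (e r)))
              (fun p q r t => lin1 (e t) (e q))
        _ = con6 ginv (fun p q r t u v =>
              GG g N (e p) (e r) (J (e u)) * GG g N (J (e t)) (e v) (e q)) := by
            rw [con6_perm23 ginv (fun p q r t u v =>
              GG g N (e p) (e u) (J (e r)) * GG g N (J (e v)) (e t) (e q))]
        _ = con6 ginv (fun p q r t u v =>
              GG g N (e p) (e r) (e u) * GG g N (J (e t)) (J (e v)) (e q)) :=
            hmove (fun p q r t => fun a => GG g N (e p) (e r) a)
              (fun p q r t => fun b => GG g N (J (e t)) b (e q))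
              (fun p q r t => lin3 (e p) (e r))
              (fun p q r t => lin2 (J (e t)) (e q))
        _ = con6 ginv (fun p q r t u v =>
              GG g N (e p) (e r) (e u) * GG g N (e t) (e v) (e q)) :=
            con6_congr _ _ _ (fun p q r t u v => by rw [pGJJ (e t) (e v) (e q)])
    calc con6 ginv (fun p q r t u v =>
            GG g N (J (e u)) (e p) (J (e r)) * GG g N (e q) (e t) (e v))
        = con6 ginv (fun p q r t u v =>
            -(GG g N (e u) (J (e p)) (J (e r)) * GG g N (e q) (e t) (e v))) :=
          con6_congr _ _ _ (fun p q r t u v => by rw [pG2 (e u) (e p) (J (e r))]; ring)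
      _ = -(con6 ginv (fun p q r t u v =>
            GG g N (e u) (J (e p)) (J (e r)) * GG g N (e q) (e t) (e v))) :=
          con6_neg ginv _
      _ = -(SC + 3 * TC) := by rw [chain, hX1]
  have hL2 : con6 ginv (fun p q r t u v => GG g N (J (e u)) (e r) (J (e p)) * GG g N (e q) (e t) (e v))
      = -(SC + 3 * TC) := by
    have chain : con6 ginv (fun p q r t u v =>
        GG g N (e u) (J (e r)) (J (e p)) * GG g N (e q) (e t) (e v))
        = con6 ginv (fun p q r t u v => GG g N (e r) (e p) (e u) * GG g N (e v) (e q) (e t)) := by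
      calc con6 ginv (fun p q r t u v =>
              GG g N (e u) (J (e r)) (J (e p)) * GG g N (e q) (e t) (e v))
          = con6 ginv (fun p q r t u v =>
              GG g N (e r) (J (e u)) (J (e p)) * GG g N (e q) (e v) (e t)) := by
            rw [con6_perm23 ginv (fun p q r t u v =>
              GG g N (e u) (J (e r)) (J (e p)) * GG g N (e q) (e t) (e v))]
        _ = con6 ginv (fun p q r t u v =>
              GG g N (e r) (e u) (J (e p)) * GG g N (e q) (J (e v)) (e t)) :=
            hmove (fun p q r t => fun a => GG g N (e r) a (J (e p)))
              (fun p q r t => fun b => GG g N (e q) b (e t))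
              (fun p q r t => lin2 (e r) (J (e p)))
              (fun p q r t => lin2 (e q) (e t))
        _ = con6 ginv (fun p q r t u v =>
              GG g N (e r) (e p) (J (e u)) * GG g N (e v) (J (e q)) (e t)) := by
            rw [con6_perm13 ginv (fun p q r t u v =>
              GG g N (e r) (e u) (J (e p)) * GG g N (e q) (J (e v)) (e t))]
        _ = con6 ginv (fun p q r t u v =>
              GG g N (e r) (e p) (e u) * GG g N (J (e v)) (J (e q)) (e t)) :=
            hmove (fun p q r t => fun a => GG g N (e r) (e p) a)
              (fun p q r t => fun b => GG g N b (J (e q)) (e t))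
              (fun p q r t => lin3 (e r) (e p))
              (fun p q r t => lin1 (J (e q)) (e t))
        _ = con6 ginv (fun p q r t u v =>
              GG g N (e r) (e p) (e u) * GG g N (e v) (e q) (e t)) :=
            con6_congr _ _ _ (fun p q r t u v => by rw [pGJJ (e v) (e q) (e t)])
    calc con6 ginv (fun p q r t u v =>
            GG g N (J (e u)) (e r) (J (e p)) * GG g N (e q) (e t) (e v))
        = con6 ginv (fun p q r t u v =>
            -(GG g N (e u) (J (e r)) (J (e p)) * GG g N (e q) (e t) (e v))) :=
          con6_congr _ _ _ (fun p q r t u v => by rw [pG2 (e u) (e r) (J (e p))]; ring)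
      _ = -(con6 ginv (fun p q r t u v =>
            GG g N (e u) (J (e r)) (J (e p)) * GG g N (e q) (e t) (e v))) :=
          con6_neg ginv _
      _ = -(SC + 3 * TC) := by rw [chain, hX2]
  have hAid2 : con6 ginv (fun p q r t u v => GG g N (e p) (e r) (e u) * GG g N (e q) (e t) (e v))
      = -(SC + 3 * TC) + -(SC + 3 * TC) := by
    have step1 : con6 ginv (fun p q r t u v => GG g N (e p) (e r) (e u) * GG g N (e q) (e t) (e v))
        = con6 ginv (fun p q r t u v =>
            GG g N (J (e u)) (e p) (J (e r)) * GG g N (e q) (e t) (e v)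
            + GG g N (J (e u)) (e r) (J (e p)) * GG g N (e q) (e t) (e v)) :=
      con6_congr _ _ _ (fun p q r t u v => by rw [← pG11 (e u) (e p) (e r)]; ring)
    rw [step1, con6_add, hL1, hL2]
  have hkey : SC + 2 * TC = 0 := by
    have := hAid1; rw [hAid2] at this; linarith
  -- Part 5 : interface with scalarCurv
  have hSv : sqNormNablaJ = SC := by
    rw [hsqNorm, hSCdef]
    simp only [con6, Finset.mul_sum]
    refine Finset.sum_congr rfl fun i _ => Finset.sum_congr rfl fun j _ => ?_
    refine Finset.sum_congr rfl fun k _ => Finset.sum_congr rfl fun s _ => ?_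
    rw [gsplit (N (e i) (e k)) (N (e j) (e s)), Finset.mul_sum]
    refine Finset.sum_congr rfl fun a _ => ?_
    rw [Finset.mul_sum]
    refine Finset.sum_congr rfl fun b _ => ?_
    rw [hg_symm (e b) (N (e j) (e s))]
    ring
  have hTP : scalarCurv ginv (⇑e) P = TC := by
    have hsplit : scalarCurv ginv (⇑e) P
        = (∑ k, ∑ s, ginv k s * ∑ i, ∑ j, ginv i j * g (N (e i) (e s)) (N (e k) (e j)))
          - ∑ k, ∑ s, ginv k s * ∑ i, ∑ j, ginv i j * g (N (e k) (e s)) (N (e i) (e j)) := by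
      simp only [scalarCurv, ricci, hP, mul_sub, Finset.mul_sum, ← Finset.sum_sub_distrib]
    have hT2 : (∑ k, ∑ s, ginv k s * ∑ i, ∑ j, ginv i j * g (N (e k) (e s)) (N (e i) (e j))) = 0 := by
      have hz : ∀ k s, (∑ i, ∑ j, ginv i j * g (N (e k) (e s)) (N (e i) (e j))) = 0 := by
        intro k s
        have : (∑ i, ∑ j, ginv i j * g (N (e k) (e s)) (N (e i) (e j)))
            = ∑ i, ∑ j, ginv i j * g (N (e i) (e j)) (N (e k) (e s)) := by
          refine Finset.sum_congr rfl fun i _ => Finset.sum_congr rfl fun j _ => ?_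
          rw [hg_symm]
        rw [this, tvec]
      simp only [hz, mul_zero, Finset.sum_const_zero]
    have hT1 : (∑ k, ∑ s, ginv k s * ∑ i, ∑ j, ginv i j * g (N (e i) (e s)) (N (e k) (e j)))
        = TC := by
      have step1 : (∑ k, ∑ s, ginv k s * ∑ i, ∑ j, ginv i j * g (N (e i) (e s)) (N (e k) (e j)))
          = con6 ginv (fun p q r t u v => g (N (e r) (e q)) (e u) * g (N (e p) (e t)) (e v)) := by
        simp only [con6, Finset.mul_sum]
        refine Finset.sum_congr rfl fun k _ => Finset.sum_congr rfl fun s _ => ?_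
        refine Finset.sum_congr rfl fun i _ => Finset.sum_congr rfl fun j _ => ?_
        rw [gsplit (N (e i) (e s)) (N (e k) (e j))]
        simp only [Finset.mul_sum]
        refine Finset.sum_congr rfl fun a _ => Finset.sum_congr rfl fun b _ => ?_
        rw [hg_symm (e b) (N (e k) (e j))]
      calc (∑ k, ∑ s, ginv k s * ∑ i, ∑ j, ginv i j * g (N (e i) (e s)) (N (e k) (e j)))
          = con6 ginv (fun p q r t u v => g (N (e r) (e q)) (e u) * g (N (e p) (e t)) (e v)) :=
            step1
        _ = con6 ginv (fun p q r t u v => g (N (e p) (e t)) (e u) * g (N (e r) (e q)) (e v)) := by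
            rw [con6_perm12 ginv
              (fun p q r t u v => g (N (e r) (e q)) (e u) * g (N (e p) (e t)) (e v))]
        _ = con6 ginv (fun p q r t u v => g (N (e p) (e r)) (e u) * g (N (e t) (e q)) (e v)) := by
            rw [con6_swap2 ginv wsymm
              (fun p q r t u v => g (N (e p) (e t)) (e u) * g (N (e r) (e q)) (e v))]
        _ = TC := hTCdef.symm
    rw [hsplit, hT1, hT2]
    ring
  have hSS : tauStarStar
      = ∑ k, ∑ s, ginv k s * ∑ i, ∑ j, ginv i j * R (e i) (e k) (J (e s)) (J (e j)) := by
    rw [hTauStarStar,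
      sum4_comm (fun i j k s => ginv i j * ginv k s * R (e i) (e k) (J (e s)) (J (e j)))]
    simp only [Finset.mul_sum]
    refine Finset.sum_congr rfl fun k _ => Finset.sum_congr rfl fun s _ => ?_
    refine Finset.sum_congr rfl fun i _ => Finset.sum_congr rfl fun j _ => ?_
    ring
  have hTauK : scalarCurv ginv (⇑e) K
      = (1/4) * (2 * scalarCurv ginv (⇑e) R - 2 * tauStarStar + scalarCurv ginv (⇑e) P) := by
    rw [hSS]
    simp only [scalarCurv, ricci, hK, mul_sub, mul_add, Finset.mul_sum,
      ← Finset.sum_sub_distrib, ← Finset.sum_add_distrib]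
    refine Finset.sum_congr rfl fun k _ => Finset.sum_congr rfl fun s _ => ?_
    refine Finset.sum_congr rfl fun i _ => Finset.sum_congr rfl fun j _ => ?_
    ring
  have hP2 : scalarCurv ginv (⇑e) P = -(1/2) * sqNormNablaJ := by
    rw [hTP, hSv]; linarith
  linarith [hTau, hTauK, hP2]
end

section
/- (Proposition 3.1) Assume the quasi-Kähler (class W₃) condition, let R be a quadrilinear form on V, and assume the identity τ(R) + τ** = -(1/2)‖∇J‖² (valid on quasi-Kähler manifolds with Norden metric), where τ** = Σ g^{ij} g^{ks} R(e_i, e_k, J e_s, J e_j) and ‖∇J‖² = Σ g^{ij} g^{ks} g(N(e_i,e_k), N(e_j,e_s)). Let K(x,y,z,w) = (1/4)(2R(x,y,z,w) - 2R(x,y,Jz,Jw) + P(x,y,z,w)). Then the manifold is isotropic-Kähler, i.e. ‖∇J‖² = 0, if and only if τ(R) = τ(K). -/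
/-- (Proposition 3.1) A quasi-Kähler manifold with Norden metric is
isotropic-Kähler (`‖∇J‖² = 0`) iff `τ = τ(K)`. -/
theorem isotropic_Kaehler_iff
    {V : Type*} [AddCommGroup V] [Module ℝ V]
    (g : V →ₗ[ℝ] V →ₗ[ℝ] ℝ) (hg_symm : ∀ x y, g x y = g y x)
    (J : V →ₗ[ℝ] V) (hJ : ∀ x, J (J x) = -x)
    (hgJ : ∀ x y, g (J x) (J y) = -(g x y))
    (N : V →ₗ[ℝ] V →ₗ[ℝ] V)
    (hN1 : ∀ x y z, g (N x y) z = g (N x z) y)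
    (hN2 : ∀ x y, N x (J y) = -(J (N x y)))
    (F : V → V → V → ℝ) (hF : ∀ x y z, F x y z = g (N x y) z)
    (hW3 : ∀ x y z, F x y z + F y z x + F z x y = 0)
    (P : V → V → V → V → ℝ)
    (hP : ∀ x y z w, P x y z w = g (N x z) (N y w) - g (N y z) (N x w))
    {ι : Type*} [Fintype ι] [DecidableEq ι]
    (e : Module.Basis ι ℝ V) (ginv : ι → ι → ℝ)
    (hginv : ∀ i j, ∑ k, ginv i k * g (e k) (e j) = if i = j then 1 else 0)
    (R : V → V → V → V → ℝ)
    (K : V → V → V → V → ℝ)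
    (hK : ∀ x y z w, K x y z w
      = (1/4) * (2 * R x y z w - 2 * R x y (J z) (J w) + P x y z w))
    (tauStarStar : ℝ)
    (hTauStarStar : tauStarStar
      = ∑ i, ∑ j, ∑ k, ∑ s,
          ginv i j * ginv k s * R (e i) (e k) (J (e s)) (J (e j)))
    (sqNormNablaJ : ℝ)
    (hsqNorm : sqNormNablaJ
      = ∑ i, ∑ j, ∑ k, ∑ s,
          ginv i j * ginv k s * g (N (e i) (e k)) (N (e j) (e s)))
    (hTau : scalarCurv ginv (⇑e) R + tauStarStar = -(1/2) * sqNormNablaJ) :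
    sqNormNablaJ = 0 ↔ scalarCurv ginv (⇑e) R = scalarCurv ginv (⇑e) K := by
  classical
  -- symmetry of the inverse metric
  have hAsymm : ∀ i j, ginv i j = ginv j i := by
    let G : Matrix ι ι ℝ := Matrix.of fun i j => g (e i) (e j)
    let A : Matrix ι ι ℝ := Matrix.of fun i j => ginv i j
    have hAG : A * G = 1 := by
      ext i j
      simpa [Matrix.mul_apply, A, G, Matrix.one_apply] using hginv i j
    have hGA : G * A = 1 := mul_eq_one_comm.mp hAG
    have hGsymm : G.transpose = G := by
      ext i j; simp [Matrix.transpose_apply, G, hg_symm (e j) (e i)]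
    have hAT : A.transpose * G = 1 := by
      have h := congrArg Matrix.transpose hGA
      rwa [Matrix.transpose_mul, hGsymm, Matrix.transpose_one] at h
    have hTA : A.transpose = A := by
      calc A.transpose = A.transpose * (G * A) := by rw [hGA, Matrix.mul_one]
        _ = (A.transpose * G) * A := by rw [Matrix.mul_assoc]
        _ = A := by rw [hAT, Matrix.one_mul]
    intro i j
    have h2 : A.transpose j i = A j i := by rw [hTA]
    simpa [Matrix.transpose_apply, A] using h2
  -- expansion of g in the first argument
  have hgexp : ∀ (x w : V), g x w = ∑ n, e.repr x n * g (e n) w := by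
    intro x w
    conv_lhs => rw [← Module.Basis.sum_repr e x]
    simp only [map_sum, LinearMap.sum_apply, map_smul, LinearMap.smul_apply, smul_eq_mul]
  have hrepr : ∀ (y : V) (m : ι), (∑ m', ginv m m' * g y (e m')) = e.repr y m := by
    intro y m
    calc (∑ m', ginv m m' * g y (e m'))
        = ∑ m', ∑ n, e.repr y n * (ginv m m' * g (e m') (e n)) := by
          refine Finset.sum_congr rfl fun m' _ => ?_
          rw [hgexp y (e m'), Finset.mul_sum]
          refine Finset.sum_congr rfl fun n _ => ?_
          rw [hg_symm (e n) (e m')]; ring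
      _ = ∑ n, e.repr y n * (∑ m', ginv m m' * g (e m') (e n)) := by
          rw [Finset.sum_comm]
          exact Finset.sum_congr rfl fun n _ => by rw [Finset.mul_sum]
      _ = ∑ n, e.repr y n * (if m = n then 1 else 0) :=
          Finset.sum_congr rfl fun n _ => by rw [hginv m n]
      _ = e.repr y m := by simp
  -- the completeness / contraction relation
  have CR : ∀ x y : V, (∑ k, ∑ k', ginv k k' * (g x (e k) * g y (e k'))) = g x y := by
    intro x y
    calc (∑ k, ∑ k', ginv k k' * (g x (e k) * g y (e k')))
        = ∑ k, g x (e k) * (∑ k', ginv k k' * g y (e k')) := by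
          refine Finset.sum_congr rfl fun k _ => ?_
          rw [Finset.mul_sum]
          exact Finset.sum_congr rfl fun k' _ => by ring
      _ = ∑ k, g x (e k) * e.repr y k :=
          Finset.sum_congr rfl fun k _ => by rw [hrepr y k]
      _ = g x y := by
          rw [hg_symm x y, hgexp y x]
          exact Finset.sum_congr rfl fun k _ => by rw [hg_symm (e k) x]; ring
  -- generic index shuffles
  have SW : ∀ H : ι → ι → ℝ,
      (∑ k, ∑ k', ginv k k' * H k k') = ∑ k, ∑ k', ginv k k' * H k' k := by
    intro H
    rw [Finset.sum_comm]
    exact Finset.sum_congr rfl fun k _ => Finset.sum_congr rfl fun k' _ => by rw [hAsymm]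
  have sum4comm : ∀ Fn : ι → ι → ι → ι → ℝ,
      (∑ a, ∑ b, ∑ c, ∑ d, Fn a b c d) = ∑ c, ∑ d, ∑ a, ∑ b, Fn a b c d := by
    intro Fn
    have h1 : (∑ a, ∑ b, ∑ c, ∑ d, Fn a b c d)
        = ∑ p : (ι × ι) × ι × ι, Fn p.1.1 p.1.2 p.2.1 p.2.2 := by
      simp only [Fintype.sum_prod_type]
    have h2 : (∑ c, ∑ d, ∑ a, ∑ b, Fn a b c d)
        = ∑ p : (ι × ι) × ι × ι, Fn p.2.1 p.2.2 p.1.1 p.1.2 := by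
      simp only [Fintype.sum_prod_type]
    rw [h1, h2]
    exact Fintype.sum_bijective (fun p => (p.2, p.1))
      (Function.Involutive.bijective fun p => rfl) _ _ (fun p => rfl)
  -- the 6-index contraction functional
  set S6 : (ι → ι → ι → ι → ι → ι → ℝ) → ℝ := fun f =>
    ∑ i, ∑ i', ∑ k, ∑ k', ∑ m, ∑ m',
      ginv i i' * ginv k k' * ginv m m' * f i i' k k' m m' with hS6
  have prodform : ∀ f, S6 f = ∑ p : (ι × ι) × (ι × ι) × ι × ι,
      ginv p.1.1 p.1.2 * ginv p.2.1.1 p.2.1.2 * ginv p.2.2.1 p.2.2.2 *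
        f p.1.1 p.1.2 p.2.1.1 p.2.1.2 p.2.2.1 p.2.2.2 := by
    intro f
    simp only [hS6, Fintype.sum_prod_type]
  have bswap12 : ∀ f, S6 f = S6 (fun i i' k k' m m' => f k k' i i' m m') := by
    intro f
    rw [prodform, prodform]
    exact Fintype.sum_bijective (fun p => (p.2.1, p.1, p.2.2))
      (Function.Involutive.bijective fun p => rfl) _ _
      (fun p => by dsimp; ring)
  have bswap23 : ∀ f, S6 f = S6 (fun i i' k k' m m' => f i i' m m' k k') := by
    intro f
    rw [prodform, prodform]
    exact Fintype.sum_bijective (fun p => (p.1, p.2.2, p.2.1))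
      (Function.Involutive.bijective fun p => rfl) _ _
      (fun p => by dsimp; ring)
  have pswap2 : ∀ f, S6 f = S6 (fun i i' k k' m m' => f i i' k' k m m') := by
    intro f
    rw [prodform, prodform]
    refine Fintype.sum_bijective (fun p => (p.1, (p.2.1.2, p.2.1.1), p.2.2))
      (Function.Involutive.bijective fun p => rfl) _ _ (fun p => ?_)
    dsimp
    rw [hAsymm p.2.1.1 p.2.1.2]
  have bcyc' : ∀ f, S6 f = S6 (fun i i' k k' m m' => f m m' i i' k k') :=
    fun f => (bswap12 f).trans (bswap23 _)
  have bcyc'' : ∀ f, S6 f = S6 (fun i i' k k' m m' => f k k' m m' i i') :=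
    fun f => (bswap23 f).trans (bswap12 _)
  have S6add : ∀ f h, S6 (fun i i' k k' m m' =>
      f i i' k k' m m' + h i i' k k' m m') = S6 f + S6 h := by
    intro f h
    simp only [hS6, mul_add, Finset.sum_add_distrib]
  have S6neg : ∀ f, S6 (fun i i' k k' m m' => -(f i i' k k' m m')) = -(S6 f) := by
    intro f
    simp only [hS6, mul_neg, Finset.sum_neg_distrib]
  -- g(Ju,v) = g(u,Jv)
  have hJg : ∀ u v, g (J u) v = g u (J v) := by
    intro u v
    have h := hgJ (J u) v
    rw [hJ u] at h
    simp only [map_neg, LinearMap.neg_apply, neg_inj] at h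
    linarith [h]
  -- the g-trace of x ↦ (∇_z J) x vanishes
  have Ltr : ∀ z : V, (∑ k, ∑ k', ginv k k' * g (N z (e k)) (e k')) = 0 := by
    intro z
    have pt : ∀ x y : V, g (N z x) y = g (N z (J x)) (J y) := by
      intro x y
      rw [hN2 z x]
      simp only [map_neg, LinearMap.neg_apply, hgJ, neg_neg]
    have pt2 : ∀ k m : ι, g (N z (J (e k))) (e m) = g (J (N z (e m))) (e k) := by
      intro k m
      rw [hN1 z (J (e k)) (e m), ← hJg (N z (e m)) (e k)]
    have pt3 : ∀ k' m' : ι, g (J (e k')) (e m') = g (J (e m')) (e k') := by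
      intro k' m'
      rw [hJg (e k') (e m'), hg_symm]
    have key : (∑ k, ∑ k', ginv k k' * g (N z (e k)) (e k'))
        = -(∑ k, ∑ k', ginv k k' * g (N z (e k)) (e k')) := by
      calc (∑ k, ∑ k', ginv k k' * g (N z (e k)) (e k'))
          = ∑ k, ∑ k', ∑ m, ∑ m', ginv k k' *
              (ginv m m' * (g (J (N z (e m))) (e k) * g (J (e m')) (e k'))) := by
            refine Finset.sum_congr rfl fun k _ => Finset.sum_congr rfl fun k' _ => ?_
            rw [pt (e k) (e k'), ← CR (N z (J (e k))) (J (e k')), Finset.mul_sum]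
            refine Finset.sum_congr rfl fun m _ => ?_
            rw [Finset.mul_sum]
            refine Finset.sum_congr rfl fun m' _ => ?_
            rw [pt2 k m, pt3 k' m']
        _ = ∑ m, ∑ m', ∑ k, ∑ k', ginv k k' *
              (ginv m m' * (g (J (N z (e m))) (e k) * g (J (e m')) (e k'))) :=
            sum4comm _
        _ = ∑ m, ∑ m', ginv m m' * g (J (N z (e m))) (J (e m')) := by
            refine Finset.sum_congr rfl fun m _ => Finset.sum_congr rfl fun m' _ => ?_
            rw [← CR (J (N z (e m))) (J (e m')), Finset.mul_sum]
            refine Finset.sum_congr rfl fun k _ => ?_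
            rw [Finset.mul_sum]
            refine Finset.sum_congr rfl fun k' _ => by ring
        _ = -(∑ k, ∑ k', ginv k k' * g (N z (e k)) (e k')) := by
            rw [← Finset.sum_neg_distrib]
            refine Finset.sum_congr rfl fun m _ => ?_
            rw [← Finset.sum_neg_distrib]
            refine Finset.sum_congr rfl fun m' _ => ?_
            rw [hgJ]
            ring
    linarith [key]
  -- the contracted W₃ condition: Σ g^{kk'} N(e_k, e_k') = 0
  have LX : ∀ z : V, (∑ k, ∑ k', ginv k k' * g (N (e k) (e k')) z) = 0 := by
    intro z
    have pt : ∀ k k', g (N (e k) (e k')) z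
        = -(g (N (e k') (e k)) z) - g (N z (e k)) (e k') := by
      intro k k'
      have h := hW3 (e k) (e k') z
      rw [hF, hF, hF, hN1 (e k') z (e k)] at h
      linarith [h]
    have key : (∑ k, ∑ k', ginv k k' * g (N (e k) (e k')) z)
        = -(∑ k, ∑ k', ginv k k' * g (N (e k) (e k')) z)
          - (∑ k, ∑ k', ginv k k' * g (N z (e k)) (e k')) := by
      calc (∑ k, ∑ k', ginv k k' * g (N (e k) (e k')) z)
          = ∑ k, ∑ k', (-(ginv k k' * g (N (e k') (e k)) z)
              - ginv k k' * g (N z (e k)) (e k')) := by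
            refine Finset.sum_congr rfl fun k _ => Finset.sum_congr rfl fun k' _ => ?_
            rw [pt k k']; ring
        _ = -(∑ k, ∑ k', ginv k k' * g (N (e k') (e k)) z)
              - (∑ k, ∑ k', ginv k k' * g (N z (e k)) (e k')) := by
            simp only [Finset.sum_sub_distrib, Finset.sum_neg_distrib]
        _ = -(∑ k, ∑ k', ginv k k' * g (N (e k) (e k')) z)
              - (∑ k, ∑ k', ginv k k' * g (N z (e k)) (e k')) := by
            rw [← SW (fun a b => g (N (e a) (e b)) z)]
    have h3 := Ltr z
    linarith [key, h3]
  -- the basic tensor T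
  set T : ι → ι → ι → ℝ := fun a b c => g (N (e a) (e b)) (e c) with hT
  have Tsym : ∀ a b c, T a b c = T a c b := fun a b c => hN1 (e a) (e b) (e c)
  have Tcyc : ∀ a b c, T a b c = -(T b c a) - T c a b := by
    intro a b c
    have h := hW3 (e a) (e b) (e c)
    rw [hF, hF, hF] at h
    simp only [hT]
    linarith [h]
  -- ‖∇J‖² as a 6-index contraction
  have hA6 : sqNormNablaJ = S6 (fun i i' k k' m m' => T i k m * T i' k' m') := by
    rw [hsqNorm]
    simp only [hS6]
    refine Finset.sum_congr rfl fun i _ => Finset.sum_congr rfl fun i' _ => ?_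
    refine Finset.sum_congr rfl fun k _ => Finset.sum_congr rfl fun k' _ => ?_
    rw [← CR (N (e i) (e k)) (N (e i') (e k'))]
    simp only [Finset.mul_sum]
    refine Finset.sum_congr rfl fun m _ => Finset.sum_congr rfl fun m' _ => ?_
    simp only [hT]; ring
  -- τ** reindexed
  have hSS : (∑ k, ∑ s, ∑ i, ∑ j, ginv k s * (ginv i j * R (e i) (e k) (J (e s)) (J (e j))))
      = tauStarStar := by
    rw [hTauStarStar,
      ← sum4comm (fun i j k s => ginv k s * (ginv i j * R (e i) (e k) (J (e s)) (J (e j))))]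
    exact Finset.sum_congr rfl fun i _ => Finset.sum_congr rfl fun j _ =>
      Finset.sum_congr rfl fun k _ => Finset.sum_congr rfl fun s _ => by ring
  -- scalar curvature of R unfolded
  have hR4 : scalarCurv ginv (⇑e) R
      = ∑ k, ∑ s, ∑ i, ∑ j, ginv k s * (ginv i j * R (e i) (e k) (e s) (e j)) := by
    simp only [scalarCurv, ricci, Finset.mul_sum]
  -- τ(P) as a difference of 6-index contractions
  have hP4 : (∑ k, ∑ s, ∑ i, ∑ j, ginv k s * (ginv i j * P (e i) (e k) (e s) (e j)))
      = S6 (fun a a' b b' c c' => T b a' c * T a b' c')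
        - S6 (fun a a' b b' c c' => T a a' c * T b b' c') := by
    have h1 : (∑ k, ∑ s, ∑ i, ∑ j,
        ginv k s * (ginv i j * g (N (e i) (e s)) (N (e k) (e j))))
        = S6 (fun a a' b b' c c' => T b a' c * T a b' c') := by
      simp only [hS6]
      refine Finset.sum_congr rfl fun k _ => Finset.sum_congr rfl fun s _ => ?_
      refine Finset.sum_congr rfl fun i _ => Finset.sum_congr rfl fun j _ => ?_
      rw [← CR (N (e i) (e s)) (N (e k) (e j))]
      simp only [Finset.mul_sum]
      refine Finset.sum_congr rfl fun m _ => Finset.sum_congr rfl fun m' _ => ?_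
      simp only [hT]; ring
    have h2 : (∑ k, ∑ s, ∑ i, ∑ j,
        ginv k s * (ginv i j * g (N (e k) (e s)) (N (e i) (e j))))
        = S6 (fun a a' b b' c c' => T a a' c * T b b' c') := by
      simp only [hS6]
      refine Finset.sum_congr rfl fun k _ => Finset.sum_congr rfl fun s _ => ?_
      refine Finset.sum_congr rfl fun i _ => Finset.sum_congr rfl fun j _ => ?_
      rw [← CR (N (e k) (e s)) (N (e i) (e j))]
      simp only [Finset.mul_sum]
      refine Finset.sum_congr rfl fun m _ => Finset.sum_congr rfl fun m' _ => ?_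
      simp only [hT]; ring
    calc (∑ k, ∑ s, ∑ i, ∑ j, ginv k s * (ginv i j * P (e i) (e k) (e s) (e j)))
        = ∑ k, ∑ s, ∑ i, ∑ j,
            (ginv k s * (ginv i j * g (N (e i) (e s)) (N (e k) (e j)))
              - ginv k s * (ginv i j * g (N (e k) (e s)) (N (e i) (e j)))) := by
          refine Finset.sum_congr rfl fun k _ => Finset.sum_congr rfl fun s _ => ?_
          refine Finset.sum_congr rfl fun i _ => Finset.sum_congr rfl fun j _ => ?_
          rw [hP]; ring
      _ = (∑ k, ∑ s, ∑ i, ∑ j,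
            ginv k s * (ginv i j * g (N (e i) (e s)) (N (e k) (e j))))
          - (∑ k, ∑ s, ∑ i, ∑ j,
            ginv k s * (ginv i j * g (N (e k) (e s)) (N (e i) (e j)))) := by
          simp only [Finset.sum_sub_distrib]
      _ = S6 (fun a a' b b' c c' => T b a' c * T a b' c')
          - S6 (fun a a' b b' c c' => T a a' c * T b b' c') := by rw [h1, h2]
  -- the second term of τ(P) vanishes
  have hBP0 : S6 (fun a a' b b' c c' => T a a' c * T b b' c') = 0 := by
    rw [bswap23 (fun a a' b b' c c' => T a a' c * T b b' c')]
    simp only [hS6]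
    refine Finset.sum_eq_zero fun i _ => Finset.sum_eq_zero fun i' _ => ?_
    refine Finset.sum_eq_zero fun k _ => Finset.sum_eq_zero fun k' _ => ?_
    have key := LX (e k')
    calc (∑ m, ∑ m', ginv i i' * ginv k k' * ginv m m' * (T i i' k * T m m' k'))
        = (ginv i i' * ginv k k' * T i i' k)
            * (∑ m, ∑ m', ginv m m' * g (N (e m) (e m')) (e k')) := by
          rw [Finset.mul_sum]
          refine Finset.sum_congr rfl fun m _ => ?_
          rw [Finset.mul_sum]
          refine Finset.sum_congr rfl fun m' _ => ?_
          simp only [hT]; ring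
      _ = 0 := by rw [key, mul_zero]
  -- the first term of τ(P) equals C
  have hCP : S6 (fun a a' b b' c c' => T b a' c * T a b' c')
      = S6 (fun i i' k k' m m' => T i k m * T k' i' m') :=
    (bswap12 _).trans (pswap2 (fun i i' k k' m m' => T i k' m * T k i' m'))
  -- the two cross terms from W₃ both equal C
  have hX2 : S6 (fun i i' k k' m m' => T k m i * T i' k' m')
      = S6 (fun i i' k k' m m' => T i k m * T k' i' m') := by
    have h1 := bcyc' (fun i i' k k' m m' => T k m i * T i' k' m')
    have h2 := bswap23 (fun i i' k k' m m' => T i k m * T m' i' k')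
    have h3 : S6 (fun i i' k k' m m' => T i m k * T k' i' m')
        = S6 (fun i i' k k' m m' => T i k m * T k' i' m') := by
      refine congrArg S6 ?_
      funext a b c d u v
      show T a u c * T d b v = T a c u * T d b v
      rw [Tsym a u c]
    exact h1.trans (h2.trans h3)
  have hX3 : S6 (fun i i' k k' m m' => T m i k * T i' k' m')
      = S6 (fun i i' k k' m m' => T i k m * T k' i' m') := by
    have h1 := bcyc'' (fun i i' k k' m m' => T m i k * T i' k' m')
    have h3 : S6 (fun i i' k k' m m' => T i k m * T k' m' i')
        = S6 (fun i i' k k' m m' => T i k m * T k' i' m') := by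
      refine congrArg S6 ?_
      funext a b c d u v
      show T a c u * T d v b = T a c u * T d b v
      rw [Tsym d v b]
    exact h1.trans h3
  -- A + 2C = 0
  have hAsplit : S6 (fun i i' k k' m m' => T i k m * T i' k' m')
      = -(S6 (fun i i' k k' m m' => T k m i * T i' k' m'))
        + -(S6 (fun i i' k k' m m' => T m i k * T i' k' m')) := by
    rw [← S6neg, ← S6neg, ← S6add]
    refine congrArg S6 ?_
    funext a b c d u v
    show T a c u * T b d v = -(T c u a * T b d v) + -(T u a c * T b d v)
    rw [Tcyc a c u]; ring
  have hACrel : S6 (fun i i' k k' m m' => T i k m * T i' k' m')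
      + 2 * S6 (fun i i' k k' m m' => T i k m * T k' i' m') = 0 := by
    rw [hAsplit, hX2, hX3]; ring
  -- τ(K) in terms of the pieces
  have hsplit : ∀ (F1 G1 H1 : ι → ι → ι → ι → ℝ),
      (1/4) * (2 * (∑ k, ∑ s, ∑ i, ∑ j, F1 k s i j)
        - 2 * (∑ k, ∑ s, ∑ i, ∑ j, G1 k s i j)
        + (∑ k, ∑ s, ∑ i, ∑ j, H1 k s i j))
      = ∑ k, ∑ s, ∑ i, ∑ j,
          (1/4) * (2 * F1 k s i j - 2 * G1 k s i j + H1 k s i j) := by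
    intro F1 G1 H1
    simp only [Finset.mul_sum, mul_sub, mul_add, Finset.sum_sub_distrib,
      Finset.sum_add_distrib]
  have hTauK : scalarCurv ginv (⇑e) K
      = (1/4) * (2 * scalarCurv ginv (⇑e) R - 2 * tauStarStar
          + (S6 (fun a a' b b' c c' => T b a' c * T a b' c')
             - S6 (fun a a' b b' c c' => T a a' c * T b b' c'))) := by
    have h0 : scalarCurv ginv (⇑e) K
        = ∑ k, ∑ s, ∑ i, ∑ j, ginv k s * (ginv i j * K (e i) (e k) (e s) (e j)) := by
      simp only [scalarCurv, ricci, Finset.mul_sum]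
    rw [h0, hR4, ← hSS, ← hP4, hsplit]
    refine Finset.sum_congr rfl fun k _ => Finset.sum_congr rfl fun s _ => ?_
    refine Finset.sum_congr rfl fun i _ => Finset.sum_congr rfl fun j _ => ?_
    rw [hK]; ring
  have hKfin : scalarCurv ginv (⇑e) K
      = scalarCurv ginv (⇑e) R + (1/8) * sqNormNablaJ := by
    rw [hTauK, hCP, hBP0]
    linarith [hTau, hA6, hACrel]
  constructor
  · intro h0
    rw [hKfin, h0]; ring
  · intro heq
    rw [hKfin] at heq
    linarith [heq]
end
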